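/- arXiv:1210.7836 — 13 statements merged into one kernel-verified Lean document; each statement's English description precedes it below -/
import Mathlib

section
/- Let F be a field of characteristic p and U a finite-dimensional F^p-linear subspace of F. Then there exists an anisotropic quasilinear p-form φ over F with D(φ) = U, and φ is unique up to isomorphism of quasilinear p-forms. -/
set_option maxHeartbeats 1000000 in
set_option synthInstance.maxHeartbeats 200000 in
/-- For a field `F` of characteristic `p` and a finite-dimensional
`F^p`-linear subspace `U ⊆ F`, there exists an anisotropic quasilinear `p`-form `φ`
over `F` with `D(φ) = U`, and `φ` is unique up to isomorphism.  Quasilinear `p`-forms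
are modeled (up to isomorphism) as maps `φ : (Fin n → F) → F` that are additive and
`p`-homogeneous; `D(φ)` is the set of values `Set.range φ`. -/
theorem stmt2 {p : ℕ} [Fact p.Prime] (F : Type*) [Field F] [CharP F p]
    (K : Subfield F) (hK : (K : Set F) = Set.range fun x : F => x ^ p)
    (U : Submodule K F) (hU : FiniteDimensional K U) :
    ∃ (n : ℕ) (φ : (Fin n → F) → F),
      (∀ v w, φ (v + w) = φ v + φ w) ∧
      (∀ (c : F) v, φ (c • v) = c ^ p * φ v) ∧
      (∀ v, φ v = 0 → v = 0) ∧
      Set.range φ = (U : Set F) ∧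
      ∀ (m : ℕ) (ψ : (Fin m → F) → F),
        (∀ v w, ψ (v + w) = ψ v + ψ w) →
        (∀ (c : F) v, ψ (c • v) = c ^ p * ψ v) →
        (∀ v, ψ v = 0 → v = 0) →
        Set.range ψ = (U : Set F) →
        ∃ e : (Fin m → F) ≃ₗ[F] (Fin n → F), ∀ v, φ (e v) = ψ v := by
  classical
  haveI := hU
  have hp : p.Prime := Fact.out
  haveI : ExpChar F p := .prime hp
  have hppos : p ≠ 0 := hp.ne_zero
  have hKmem : ∀ x : F, x ^ p ∈ K := fun x => by
    have : x ^ p ∈ (K : Set F) := by rw [hK]; exact ⟨x, rfl⟩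
    exact this
  have hsurjK : ∀ k : K, ∃ x : F, x ^ p = (k : F) := fun k => by
    have : (k : F) ∈ (K : Set F) := k.2
    rw [hK] at this; obtain ⟨x, hx⟩ := this; exact ⟨x, hx⟩
  have hsm : ∀ (g : K) (x : F), g • x = (g : F) * x := fun g x => rfl
  -- p-th power of a sum
  have frob_sum : ∀ {ι : Type} (s : Finset ι) (f : ι → F),
      (∑ i ∈ s, f i) ^ p = ∑ i ∈ s, f i ^ p := by
    intro ι s f
    have h := map_sum (frobenius F p) f s
    simp only [frobenius_def] at h
    exact h
  set nn := Module.finrank K U with hnn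
  let bU : Module.Basis (Fin nn) K U := Module.finBasis K U
  let b : Fin nn → F := fun i => (bU i : F)
  have coe_sum : ∀ (g : Fin nn → K), ((∑ i, g i • bU i : U) : F) = ∑ i, (g i : F) * b i := by
    intro g
    rw [show ((∑ i, g i • bU i : U) : F) = U.subtype (∑ i, g i • bU i) from rfl, map_sum]
    simp only [Submodule.coe_subtype, Submodule.coe_smul_of_tower, hsm, b]
  set φ : (Fin nn → F) → F := fun v => ∑ i, v i ^ p * b i with hφ
  have hφadd : ∀ v w, φ (v + w) = φ v + φ w := by
    intro v w
    simp only [hφ, Pi.add_apply, add_pow_char, add_mul, Finset.sum_add_distrib]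
  have hφsmul : ∀ (c : F) v, φ (c • v) = c ^ p * φ v := by
    intro c v
    simp only [hφ, Pi.smul_apply, smul_eq_mul, mul_pow, Finset.mul_sum, mul_assoc]
  have hφval : ∀ (g : Fin nn → K) (v : Fin nn → F), (∀ i, v i ^ p = (g i : F)) →
      φ v = ((∑ i, g i • bU i : U) : F) := by
    intro g v hv
    rw [coe_sum]
    exact Finset.sum_congr rfl fun i _ => by rw [hv i]
  have hφaniso : ∀ v, φ v = 0 → v = 0 := by
    intro v hv
    set g : Fin nn → K := fun i => ⟨v i ^ p, hKmem _⟩ with hg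
    have h0 : ((∑ i, g i • bU i : U) : F) = 0 := by
      rw [← hφval g v fun i => rfl]; exact hv
    have h1 : (∑ i, g i • bU i : U) = 0 := Subtype.ext h0
    have h2 := Fintype.linearIndependent_iff.mp bU.linearIndependent g h1
    funext i
    have : v i ^ p = 0 := congrArg Subtype.val (h2 i)
    exact pow_eq_zero_iff hppos |>.mp this
  have hφrange : Set.range φ = (U : Set F) := by
    ext u
    constructor
    · rintro ⟨v, rfl⟩
      rw [hφval (fun i => ⟨v i ^ p, hKmem _⟩) v fun i => rfl]
      exact (∑ i, (⟨v i ^ p, hKmem _⟩ : K) • bU i : U).2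
    · intro hu
      set g : Fin nn → K := fun i => bU.repr ⟨u, hu⟩ i with hg
      choose v hv using fun i => hsurjK (g i)
      refine ⟨v, ?_⟩
      rw [hφval g v hv, bU.sum_repr ⟨u, hu⟩]
  refine ⟨nn, φ, hφadd, hφsmul, hφaniso, hφrange, ?_⟩
  -- uniqueness
  intro m ψ hψadd hψsmul hψaniso hψrange
  have hψ0 : ψ 0 = 0 := by
    have := hψadd 0 0; simpa using this.symm
  let Ψ : (Fin m → F) →+ F := AddMonoidHom.mk' ψ hψadd
  set c : Fin m → F := fun j => ψ (Pi.single j 1) with hc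
  have hψdec : ∀ v, ψ v = ∑ j, v j ^ p * c j := by
    intro v
    have h1 : v = ∑ j, v j • (Pi.single j 1 : Fin m → F) := by
      funext i
      rw [Finset.sum_apply]
      simp [Pi.single_apply]
    calc ψ v = Ψ (∑ j, v j • (Pi.single j 1 : Fin m → F)) := by rw [← h1]; rfl
      _ = ∑ j, ψ (v j • (Pi.single j 1 : Fin m → F)) := map_sum Ψ _ _
      _ = ∑ j, v j ^ p * c j := Finset.sum_congr rfl fun j _ => hψsmul (v j) _
  have hcU : ∀ j, c j ∈ U := fun j => by
    have : c j ∈ Set.range ψ := ⟨Pi.single j 1, rfl⟩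
    rw [hψrange] at this; exact this
  set cU : Fin m → U := fun j => ⟨c j, hcU j⟩ with hcUdef
  -- ψ values with K-coefficients
  have hψval : ∀ (g : Fin m → K) (v : Fin m → F), (∀ j, v j ^ p = (g j : F)) →
      ψ v = ((∑ j, g j • cU j : U) : F) := by
    intro g v hv
    rw [hψdec, show ((∑ j, g j • cU j : U) : F) = U.subtype (∑ j, g j • cU j) from rfl,
      map_sum]
    refine Finset.sum_congr rfl fun j _ => ?_
    simp only [Submodule.coe_subtype, Submodule.coe_smul_of_tower, hsm, hv j, cU]
  have hli : LinearIndependent K cU := by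
    rw [Fintype.linearIndependent_iff]
    intro g hg j
    choose v hv using fun j => hsurjK (g j)
    have h0 : ψ v = 0 := by
      rw [hψval g v hv, hg]; rfl
    have := hψaniso v h0
    ext
    have : v j = 0 := congrFun this j
    rw [← hv j, this, zero_pow hppos, ZeroMemClass.coe_zero]
  have hspan : ⊤ ≤ Submodule.span K (Set.range cU) := by
    rintro ⟨u, hu⟩ -
    have : u ∈ Set.range ψ := by rw [hψrange]; exact hu
    obtain ⟨v, hv⟩ := this
    set g : Fin m → K := fun j => ⟨v j ^ p, hKmem _⟩ with hg
    have : (⟨u, hu⟩ : U) = ∑ j, g j • cU j := by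
      apply Subtype.ext
      rw [← hψval g v fun j => rfl, hv]
    rw [this]
    exact Submodule.sum_mem _ fun j _ =>
      Submodule.smul_mem _ _ (Submodule.subset_span ⟨j, rfl⟩)
  let cB : Module.Basis (Fin m) K U := Module.Basis.mk hli hspan
  have hmn : m = nn := by
    have h1 := Module.finrank_eq_card_basis cB
    rw [Fintype.card_fin] at h1
    omega
  subst hmn
  -- change of basis matrix and its p-th roots
  set k : Fin nn → Fin nn → K := fun i j => bU.repr (cU j) i with hk
  choose A hA using fun i j => hsurjK (k i j)
  have hcb : ∀ j, ∑ i, (k i j : F) * b i = c j := by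
    intro j
    have := coe_sum (fun i => k i j)
    rw [this.symm, bU.sum_repr (cU j)]
  let e₀ : (Fin nn → F) →ₗ[F] (Fin nn → F) := Matrix.mulVecLin (Matrix.of A)
  have key : ∀ v, φ (e₀ v) = ψ v := by
    intro v
    rw [hψdec]
    calc φ (e₀ v) = ∑ i, (∑ j, A i j * v j) ^ p * b i := rfl
      _ = ∑ i, (∑ j, (k i j : F) * v j ^ p) * b i := by
          refine Finset.sum_congr rfl fun i _ => ?_
          rw [frob_sum]
          congr 1
          exact Finset.sum_congr rfl fun j _ => by rw [mul_pow, hA i j]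
      _ = ∑ j, v j ^ p * c j := by
          simp_rw [Finset.sum_mul]
          rw [Finset.sum_comm]
          refine Finset.sum_congr rfl fun j _ => ?_
          rw [← hcb j, Finset.mul_sum]
          exact Finset.sum_congr rfl fun i _ => by ring
  have φ0 : φ 0 = 0 := by
    have := hφadd 0 0; simpa using this.symm
  have hinj : Function.Injective e₀ := by
    rw [← LinearMap.ker_eq_bot, LinearMap.ker_eq_bot']
    intro v hv
    exact hψaniso v (by rw [← key v, hv, φ0])
  have hsurj : Function.Surjective e₀ := LinearMap.injective_iff_surjective.mp hinj
  exact ⟨LinearEquiv.ofBijective e₀ ⟨hinj, hsurj⟩, key⟩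
end

section
/- Let φ and ψ be anisotropic quasilinear p-forms over a field F of characteristic p. Then ψ is isomorphic to a subform of φ if and only if D(ψ) ⊆ D(φ). In particular, ψ ≅ φ if and only if D(ψ) = D(φ). -/
private lemma form_inj {F V : Type*} [Field F] [AddCommGroup V]
    (φ : V → F) (hadd : ∀ v w, φ (v + w) = φ v + φ w) (han : ∀ v, φ v = 0 → v = 0) :
    Function.Injective φ := by
  intro v w h
  have h1 := hadd (v - w) w
  rw [sub_add_cancel, h] at h1
  have h2 : φ (v - w) = 0 := right_eq_add.mp h1
  exact sub_eq_zero.mp (han _ h2)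

private lemma subform_of_subset {p : ℕ} {F : Type*} [Field F]
    {V W : Type*} [AddCommGroup V] [Module F V] [AddCommGroup W] [Module F W]
    (φ : V → F) (ψ : W → F)
    (hφadd : ∀ v w : V, φ (v + w) = φ v + φ w)
    (hφsmul : ∀ (c : F) (v : V), φ (c • v) = c ^ p * φ v)
    (hφan : ∀ v : V, φ v = 0 → v = 0)
    (hψadd : ∀ v w : W, ψ (v + w) = ψ v + ψ w)
    (hψsmul : ∀ (c : F) (v : W), ψ (c • v) = c ^ p * ψ v)
    (hψan : ∀ v : W, ψ v = 0 → v = 0)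
    (h : Set.range ψ ⊆ Set.range φ) :
    ∃ f : W →ₗ[F] V, Function.Injective f ∧ ∀ w, φ (f w) = ψ w := by
  have hφinj := form_inj φ hφadd hφan
  have hψinj := form_inj ψ hψadd hψan
  choose g hg using fun w => h (Set.mem_range_self (f := ψ) w)
  refine ⟨{ toFun := g, map_add' := ?_, map_smul' := ?_ }, ?_, hg⟩
  · intro x y
    apply hφinj
    rw [hφadd, hg, hg, hg, hψadd]
  · intro c x
    apply hφinj
    simp only [RingHom.id_apply]
    rw [hφsmul, hg, hg, hψsmul]
  · intro x y hxy
    apply hψinj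
    rw [← hg, ← hg]
    exact congrArg φ hxy

/-- Let `φ`, `ψ` be anisotropic quasilinear `p`-forms over a field `F` of
characteristic `p`.  Then `ψ` is isomorphic to a subform of `φ` iff `D(ψ) ⊆ D(φ)`;
in particular `ψ ≅ φ` iff `D(ψ) = D(φ)`.  Here `D` is the set of represented values. -/
theorem stmt3 {p : ℕ} [Fact p.Prime] (F : Type*) [Field F] [CharP F p]
    (V W : Type*) [AddCommGroup V] [Module F V] [FiniteDimensional F V]
    [AddCommGroup W] [Module F W] [FiniteDimensional F W]
    (φ : V → F) (ψ : W → F)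
    (hφadd : ∀ v w : V, φ (v + w) = φ v + φ w)
    (hφsmul : ∀ (c : F) (v : V), φ (c • v) = c ^ p * φ v)
    (hφan : ∀ v : V, φ v = 0 → v = 0)
    (hψadd : ∀ v w : W, ψ (v + w) = ψ v + ψ w)
    (hψsmul : ∀ (c : F) (v : W), ψ (c • v) = c ^ p * ψ v)
    (hψan : ∀ v : W, ψ v = 0 → v = 0) :
    ((∃ f : W →ₗ[F] V, Function.Injective f ∧ ∀ w, φ (f w) = ψ w) ↔
        Set.range ψ ⊆ Set.range φ) ∧
    ((∃ e : W ≃ₗ[F] V, ∀ w, φ (e w) = ψ w) ↔ Set.range ψ = Set.range φ) := by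
  constructor
  · constructor
    · rintro ⟨f, -, hf⟩ x ⟨w, rfl⟩
      exact ⟨f w, hf w⟩
    · exact subform_of_subset φ ψ hφadd hφsmul hφan hψadd hψsmul hψan
  · constructor
    · rintro ⟨e, he⟩
      apply Set.Subset.antisymm
      · rintro x ⟨w, rfl⟩
        exact ⟨e w, he w⟩
      · rintro x ⟨v, rfl⟩
        exact ⟨e.symm v, by rw [← he (e.symm v), e.apply_symm_apply]⟩
    · intro heq
      obtain ⟨f, hfinj, hf⟩ :=
        subform_of_subset φ ψ hφadd hφsmul hφan hψadd hψsmul hψan heq.le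
      obtain ⟨g, hginj, hg⟩ :=
        subform_of_subset ψ φ hψadd hψsmul hψan hφadd hφsmul hφan heq.ge
      have h1 := LinearMap.finrank_le_finrank_of_injective hfinj
      have h2 := LinearMap.finrank_le_finrank_of_injective hginj
      have hdim : Module.finrank F W = Module.finrank F V := le_antisymm h1 h2
      have hsurj := (LinearMap.injective_iff_surjective_of_finrank_eq_finrank hdim).mp hfinj
      exact ⟨LinearEquiv.ofBijective f ⟨hfinj, hsurj⟩, hf⟩
end

section
/- Let φ and ψ be anisotropic quasilinear p-forms over a field F of characteristic p. Then the defect index of the direct sum φ ⊕ ψ equals the F^p-dimension of the intersection D(φ) ∩ D(ψ). -/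
set_option synthInstance.maxHeartbeats 800000
set_option maxHeartbeats 1000000

/-- For anisotropic quasilinear `p`-forms `φ`, `ψ` over a field `F` of
characteristic `p`, the defect index of `φ ⊕ ψ` equals the `F^p`-dimension of
`D(φ) ∩ D(ψ)`.  Here `K = F^p`, the defect index is the `F`-dimension of the
(sub)space of isotropic vectors of `(v, w) ↦ φ v + ψ w`, and `D` of a form is the
`K`-span of its set of values (which is already a `K`-subspace). -/
theorem stmt4 {p : ℕ} [Fact p.Prime] (F : Type*) [Field F] [CharP F p]
    (K : Subfield F) (hK : (K : Set F) = Set.range fun x : F => x ^ p)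
    (V W : Type*) [AddCommGroup V] [Module F V] [FiniteDimensional F V]
    [AddCommGroup W] [Module F W] [FiniteDimensional F W]
    (φ : V → F) (ψ : W → F)
    (hφadd : ∀ v w : V, φ (v + w) = φ v + φ w)
    (hφsmul : ∀ (c : F) (v : V), φ (c • v) = c ^ p * φ v)
    (hφan : ∀ v : V, φ v = 0 → v = 0)
    (hψadd : ∀ v w : W, ψ (v + w) = ψ v + ψ w)
    (hψsmul : ∀ (c : F) (v : W), ψ (c • v) = c ^ p * ψ v)
    (hψan : ∀ v : W, ψ v = 0 → v = 0) :
    Module.finrank F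
        (Submodule.span F {x : V × W | φ x.1 + ψ x.2 = 0}) =
      Module.finrank K
        ↥(Submodule.span K (Set.range φ) ⊓ Submodule.span K (Set.range ψ)) := by
  have hφ0 : φ 0 = 0 := by
    have h := hφadd 0 0; rw [add_zero] at h; exact (left_eq_add.mp h)
  have hψ0 : ψ 0 = 0 := by
    have h := hψadd 0 0; rw [add_zero] at h; exact (left_eq_add.mp h)
  have hφneg : ∀ v : V, φ (-v) = -φ v := by
    intro v
    have h := hφadd v (-v)
    rw [add_neg_cancel, hφ0] at h
    linear_combination -h
  have hψneg : ∀ w : W, ψ (-w) = -ψ w := by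
    intro w
    have h := hψadd w (-w)
    rw [add_neg_cancel, hψ0] at h
    linear_combination -h
  -- the isotropic set is a submodule
  set S : Submodule F (V × W) :=
    { carrier := {x : V × W | φ x.1 + ψ x.2 = 0}
      add_mem' := by
        intro a b ha hb
        simp only [Set.mem_setOf_eq, Prod.fst_add, Prod.snd_add] at *
        rw [hφadd, hψadd]; linear_combination ha + hb
      zero_mem' := by
        simp only [Set.mem_setOf_eq, Prod.fst_zero, Prod.snd_zero, hφ0, hψ0, add_zero]
      smul_mem' := by
        intro c a ha
        simp only [Set.mem_setOf_eq, Prod.smul_fst, Prod.smul_snd] at *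
        rw [hφsmul, hψsmul]
        calc c ^ p * φ a.1 + c ^ p * ψ a.2 = c ^ p * (φ a.1 + ψ a.2) := by ring
        _ = 0 := by rw [ha, mul_zero] } with hS
  -- the ranges are K-submodules
  have hsmulK : ∀ (k : K) (a : F), k • a = (k : F) * a := fun _ _ => rfl
  have hKmem : ∀ k : K, ∃ c : F, c ^ p = (k : F) := by
    intro k
    have : (k : F) ∈ (K : Set F) := k.2
    rw [hK] at this
    obtain ⟨c, hc⟩ := this
    exact ⟨c, hc⟩
  set Dφ : Submodule K F :=
    { carrier := Set.range φ
      add_mem' := by rintro a b ⟨v, rfl⟩ ⟨w, rfl⟩; exact ⟨v + w, hφadd v w⟩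
      zero_mem' := ⟨0, hφ0⟩
      smul_mem' := by
        rintro k a ⟨v, rfl⟩
        obtain ⟨c, hc⟩ := hKmem k
        exact ⟨c • v, by rw [hφsmul, hc, hsmulK]⟩ } with hDφ
  set Dψ : Submodule K F :=
    { carrier := Set.range ψ
      add_mem' := by rintro a b ⟨v, rfl⟩ ⟨w, rfl⟩; exact ⟨v + w, hψadd v w⟩
      zero_mem' := ⟨0, hψ0⟩
      smul_mem' := by
        rintro k a ⟨v, rfl⟩
        obtain ⟨c, hc⟩ := hKmem k
        exact ⟨c • v, by rw [hψsmul, hc, hsmulK]⟩ } with hDψ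
  have hspanS : Submodule.span F {x : V × W | φ x.1 + ψ x.2 = 0} = S :=
    Submodule.span_eq S
  have hspanφ : Submodule.span K (Set.range φ) = Dφ := Submodule.span_eq Dφ
  have hspanψ : Submodule.span K (Set.range ψ) = Dψ := Submodule.span_eq Dψ
  rw [hspanS, hspanφ, hspanψ]
  -- the semilinear bijection
  set D : Submodule K F := Dφ ⊓ Dψ with hD
  have hmemS : ∀ x : V × W, x ∈ S ↔ φ x.1 + ψ x.2 = 0 := fun x => Iff.rfl
  set f : S →+ D :=
    { toFun := fun x => ⟨φ (x : V × W).1, ⟨(x : V × W).1, rfl⟩,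
        ⟨-(x : V × W).2, by
          rw [hψneg]
          have hx := x.2
          rw [hmemS] at hx
          linear_combination -hx⟩⟩
      map_zero' := by
        ext
        simp [hφ0]
      map_add' := by
        intro a b
        ext
        simp [hφadd] } with hf
  have hfbij : Function.Bijective f := by
    constructor
    · intro a b hab
      have h1 : φ (a : V × W).1 = φ (b : V × W).1 := congrArg Subtype.val hab
      have hd : φ ((a : V × W).1 + -(b : V × W).1) = 0 := by
        rw [hφadd, hφneg, h1, add_neg_cancel]
      have h1' : (a : V × W).1 = (b : V × W).1 := add_neg_eq_zero.mp (hφan _ hd)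
      have ha := a.2; have hb := b.2
      rw [hmemS] at ha hb
      have hd2 : ψ ((a : V × W).2 + -(b : V × W).2) = 0 := by
        rw [hψadd, hψneg]
        linear_combination ha - hb - h1
      have h2' : (a : V × W).2 = (b : V × W).2 := add_neg_eq_zero.mp (hψan _ hd2)
      exact Subtype.ext (Prod.ext h1' h2')
    · rintro ⟨a, ⟨v, rfl⟩, ⟨w, hw⟩⟩
      refine ⟨⟨(v, -w), ?_⟩, ?_⟩
      · rw [hmemS]
        simp only
        rw [hψneg, hw, add_neg_cancel]
      · exact Subtype.ext rfl
  set j : S ≃+ D := AddEquiv.ofBijective f hfbij with hj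
  set e : ZeroHom F K :=
    { toFun := fun c => ⟨c ^ p, by
        have : c ^ p ∈ (K : Set F) := by rw [hK]; exact ⟨c, rfl⟩
        exact this⟩
      map_zero' := by
        ext
        simp [zero_pow (Fact.out (p := p.Prime)).ne_zero] } with he
  have hebij : Function.Bijective e := by
    constructor
    · intro a b hab
      have : a ^ p = b ^ p := congrArg Subtype.val hab
      exact frobenius_inj F p this
    · rintro ⟨a, ha⟩
      rw [← SetLike.mem_coe, hK] at ha
      obtain ⟨c, hc⟩ := ha
      exact ⟨c, Subtype.ext hc⟩
  have hc : ∀ (c : F) (m : S), j (c • m) = e c • j m := by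
    intro c m
    apply Subtype.ext
    show φ (c • (m : V × W)).1 = (e c : F) * φ (m : V × W).1
    rw [Prod.smul_fst, hφsmul]
    rfl
  have hrank := lift_rank_eq_of_equiv_equiv (R := F) (R' := K) (M := S) (M' := D)
    e j hebij hc
  have : Module.rank F S = Cardinal.lift.{0} (Module.rank F S) := by simp
  rw [Module.finrank, Module.finrank]
  rw [← Cardinal.toNat_lift (Module.rank F S), hrank, Cardinal.toNat_lift]
end

section
/- Let F be a field of characteristic p and a₁, ..., aₙ ∈ F. The quasi-Pfister form ⟪a₁,...,aₙ⟫ (the tensor product of the forms ⟨1, aᵢ, aᵢ², ..., aᵢ^{p-1}⟩) is anisotropic if and only if [F^p(a₁,...,aₙ) : F^p] = p^n. -/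
set_option synthInstance.maxHeartbeats 800000
set_option maxHeartbeats 1000000

open scoped BigOperators

/-- Coefficients of the quasi-Pfister form `⟪a₁,…,aₙ⟫ = ⨂ᵢ ⟨1, aᵢ, …, aᵢ^{p-1}⟩`:
indexed by exponent vectors `e : Fin n → Fin p`, the coefficient is `∏ i, aᵢ^{eᵢ}`. -/
def pfCoeff {F : Type*} [Field F] {p n : ℕ} (a : Fin n → F) : (Fin n → Fin p) → F :=
  fun e => ∏ i, a i ^ (e i : ℕ)

/-- The quasi-Pfister form `⟪a₁,…,aₙ⟫` over a field `F` of characteristic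
`p` is anisotropic iff `[F^p(a₁,…,aₙ) : F^p] = p^n`.  Here `K = F^p` is the subfield of
`p`-th powers and anisotropy means the only isotropic vector is `0`. -/
theorem stmt5 {p : ℕ} [Fact p.Prime] (F : Type*) [Field F] [CharP F p]
    (K : Subfield F) (hK : (K : Set F) = Set.range fun x : F => x ^ p)
    (n : ℕ) (a : Fin n → F) :
    (∀ x : (Fin n → Fin p) → F, ∑ e, pfCoeff a e * x e ^ p = 0 → x = 0) ↔
      Module.finrank K (IntermediateField.adjoin K (Set.range a)) = p ^ n := by
  classical
  have hp : p.Prime := Fact.out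
  haveI : NeZero p := ⟨hp.ne_zero⟩
  set c : (Fin n → Fin p) → F := pfCoeff a with hc
  have hKmem : ∀ x : F, x ^ p ∈ K := by
    intro x
    rw [← SetLike.mem_coe, hK]
    exact ⟨x, rfl⟩
  have hsmul : ∀ (k : K) (x : F), k • x = (k : F) * x := fun k x => rfl
  -- Step 1: anisotropy ↔ linear independence of the monomials over K
  have h1 : (∀ x : (Fin n → Fin p) → F, ∑ e, pfCoeff a e * x e ^ p = 0 → x = 0)
      ↔ LinearIndependent K c := by
    rw [Fintype.linearIndependent_iff]
    constructor
    · intro h g hg e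
      have hy : ∀ e, ∃ y : F, y ^ p = (g e : F) := by
        intro e
        have := (g e).2
        rw [← SetLike.mem_coe, hK] at this
        obtain ⟨y, hy⟩ := this
        exact ⟨y, hy⟩
      choose y hy using hy
      have h0 : ∑ e, pfCoeff a e * y e ^ p = 0 := by
        rw [← hg]
        refine Finset.sum_congr rfl fun e _ => ?_
        rw [hsmul, hy, mul_comm]
      have := congrFun (h y h0) e
      ext
      rw [← hy e]
      simp [this, hp.ne_zero]
    · intro h x hx
      have hg : ∑ e, (⟨x e ^ p, hKmem _⟩ : K) • c e = 0 := by
        rw [← hx]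
        refine Finset.sum_congr rfl fun e _ => ?_
        rw [hsmul, mul_comm]
      funext e
      have := h (fun e => ⟨x e ^ p, hKmem _⟩) hg e
      have hxe : x e ^ p = 0 := congrArg Subtype.val this
      exact pow_eq_zero_iff hp.ne_zero |>.1 hxe
  -- the span of the monomials
  set S : Submodule K F := Submodule.span K (Set.range c) with hS
  have hmem : ∀ e, c e ∈ S := fun e => Submodule.subset_span ⟨e, rfl⟩
  -- product of two monomials lies back in the span
  have hmul_mono : ∀ e e' : Fin n → Fin p, c e * c e' ∈ S := by
    intro e e'
    set r : Fin n → Fin p := fun i => ⟨((e i : ℕ) + (e' i : ℕ)) % p, Nat.mod_lt _ hp.pos⟩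
    have key : c e * c e' = (∏ i, (a i ^ (((e i : ℕ) + (e' i : ℕ)) / p)) ^ p) * c r := by
      simp only [hc, pfCoeff, ← Finset.prod_mul_distrib]
      refine Finset.prod_congr rfl fun i _ => ?_
      rw [← pow_add, ← pow_mul, ← pow_add]
      congr 1
      exact (Nat.div_add_mod' _ p).symm
    have hk : (∏ i, (a i ^ (((e i : ℕ) + (e' i : ℕ)) / p)) ^ p) ∈ K :=
      Subfield.prod_mem K fun i _ => hKmem _
    rw [key]
    have := S.smul_mem (⟨_, hk⟩ : K) (hmem r)
    rwa [hsmul] at this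
  -- the span is closed under multiplication
  have hmul : ∀ x y : F, x ∈ S → y ∈ S → x * y ∈ S := by
    have step : ∀ e, ∀ y ∈ S, c e * y ∈ S := by
      intro e y hy
      have hle : S ≤ S.comap (LinearMap.mulLeft K (c e)) := by
        rw [hS, Submodule.span_le]
        rintro _ ⟨e', rfl⟩
        exact hmul_mono e e'
      exact hle hy
    intro x y hx hy
    have hle : S ≤ S.comap (LinearMap.mulRight K y) := by
      rw [hS, Submodule.span_le]
      rintro _ ⟨e, rfl⟩
      exact step e y hy
    exact hle hx
  have h_one : (1 : F) ∈ S := by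
    have : c 0 = 1 := by simp [hc, pfCoeff]
    rw [← this]; exact hmem 0
  set T : Subalgebra K F := S.toSubalgebra h_one hmul with hT
  -- each `a i` is a monomial
  have ha_mono : ∀ i, a i ∈ Set.range c := by
    intro i
    refine ⟨fun j => if j = i then ⟨1, hp.one_lt⟩ else ⟨0, hp.pos⟩, ?_⟩
    simp only [hc, pfCoeff]
    rw [Fintype.prod_eq_single i]
    · simp
    · intro j hj
      simp [hj]
  -- the algebra adjoin equals the span
  have hadj : Algebra.adjoin K (Set.range a) = T := by
    refine le_antisymm (Algebra.adjoin_le ?_) ?_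
    · rintro _ ⟨i, rfl⟩
      exact Submodule.subset_span (ha_mono i)
    · intro x hx
      have hx' : x ∈ S := hx
      refine Submodule.span_induction (p := fun y _ => y ∈ Algebra.adjoin (↥K) (Set.range a)) ?_ ?_ ?_ ?_ hx'
      · rintro _ ⟨e, rfl⟩
        simp only [hc, pfCoeff]
        exact Subalgebra.prod_mem _ fun i _ =>
          Subalgebra.pow_mem _ (Algebra.subset_adjoin (Set.mem_range_self i)) _
      · exact Subalgebra.zero_mem _
      · intro u v _ _ hu hv; exact Subalgebra.add_mem _ hu hv
      · intro k u _ hu; exact Subalgebra.smul_mem _ hu k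
  -- the `a i` are algebraic over K
  have halg : ∀ x ∈ Set.range a, IsAlgebraic K x := by
    rintro _ ⟨i, rfl⟩
    refine ⟨Polynomial.X ^ p - Polynomial.C (⟨a i ^ p, hKmem _⟩ : K),
      (Polynomial.monic_X_pow_sub_C _ hp.ne_zero).ne_zero, ?_⟩
    simp only [map_sub, map_pow, Polynomial.aeval_X, Polynomial.aeval_C]
    exact sub_eq_zero.2 rfl
  have hfield := IntermediateField.adjoin_toSubalgebra_of_isAlgebraic halg
  -- compute the rank
  have hsub : Subalgebra.toSubmodule (IntermediateField.adjoin K (Set.range a)).toSubalgebra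
      = S := by rw [hfield, hadj]; rfl
  have hrank : Module.finrank K (IntermediateField.adjoin K (Set.range a))
      = (Set.range c).finrank K := by
    rw [Set.finrank, show Submodule.span (↥K) (Set.range c) = S from hS.symm, ← hsub]
    exact ((IntermediateField.adjoin K (Set.range a)).toSubalgebra.finrank_toSubmodule).symm
  rw [h1, linearIndependent_iff_card_eq_finrank_span, hrank]
  have hcard : Fintype.card (Fin n → Fin p) = p ^ n := by simp
  rw [hcard]
  exact eq_comm
end

section
/- Let F be a field of characteristic p, a₁,...,aₙ ∈ F, and π = ⟪a₁,...,aₙ⟫ the associated quasi-Pfister form. Then the anisotropic part of π is again (isomorphic to) a quasi-Pfister form; more precisely, after reordering, π_an ≅ ⟪a₁,...,a_m⟫ where p^m = [F^p(a₁,...,aₙ) : F^p]. -/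
set_option synthInstance.maxHeartbeats 800000
set_option maxHeartbeats 1000000

open scoped BigOperators

/-- The value map of the quasi-Pfister form `⟪a₁,…,aₙ⟫`. -/
def pfVal {F : Type*} [Field F] (p n : ℕ) (a : Fin n → F) : ((Fin n → Fin p) → F) → F :=
  fun x => ∑ e, pfCoeff a e * x e ^ p

set_option linter.unusedSectionVars false
set_option linter.unusedTactic false
set_option linter.unusedVariables false

section QPAux

open Polynomial

variable {p : ℕ} [Fact p.Prime] {F : Type*} [Field F] [CharP F p] {K : Subfield F}

lemma mem_K_iff (hK : (K : Set F) = Set.range fun x : F => x ^ p)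
    (y : F) : y ∈ K ↔ ∃ x : F, x ^ p = y := by
  rw [← SetLike.mem_coe, hK]; exact Iff.rfl

lemma range_pfVal_eq_span (hK : (K : Set F) = Set.range fun x : F => x ^ p)
    {n : ℕ} (a : Fin n → F) :
    Set.range (pfVal p n a) =
      (Submodule.span K (Set.range (pfCoeff (p := p) a)) : Set F) := by
  ext z
  constructor
  · rintro ⟨x, rfl⟩
    exact Submodule.sum_mem _ fun e _ => by
      have hm : x e ^ p ∈ K := (mem_K_iff hK _).2 ⟨x e, rfl⟩
      have h : pfCoeff a e * x e ^ p = (⟨x e ^ p, hm⟩ : K) • pfCoeff a e :=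
        mul_comm _ _
      rw [h]
      exact Submodule.smul_mem _ _ (Submodule.subset_span ⟨e, rfl⟩)
  · intro hz
    rw [SetLike.mem_coe, Submodule.mem_span_range_iff_exists_fun] at hz
    obtain ⟨c, hc⟩ := hz
    refine ⟨fun e => Classical.choose ((mem_K_iff hK _).1 (c e).2), ?_⟩
    rw [← hc, pfVal]
    refine Finset.sum_congr rfl fun e _ => ?_
    have := Classical.choose_spec ((mem_K_iff hK _).1 (c e).2)
    rw [this]
    exact mul_comm _ _
lemma pfCoeff_mul_pfCoeff {n : ℕ} (a : Fin n → F) (e f : Fin n → Fin p) :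
    ∃ w : F, pfCoeff a e * pfCoeff a f = w ^ p * pfCoeff a (e + f) := by
  refine ⟨∏ i, a i ^ (((e i : ℕ) + (f i : ℕ)) / p), ?_⟩
  rw [pfCoeff, pfCoeff, pfCoeff, ← Finset.prod_mul_distrib, ← Finset.prod_pow,
    ← Finset.prod_mul_distrib]
  refine Finset.prod_congr rfl fun i _ => ?_
  rw [← pow_add, ← pow_mul, ← pow_add, Pi.add_apply, Fin.val_add,
    Nat.mul_comm ((↑(e i) + ↑(f i)) / p) p, Nat.div_add_mod]

lemma span_pfCoeff_eq_adjoin (hK : (K : Set F) = Set.range fun x : F => x ^ p)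
    {n : ℕ} (a : Fin n → F) :
    (Submodule.span K (Set.range (pfCoeff (p := p) a)) : Set F) =
      (IntermediateField.adjoin K (Set.range a) : Set F) := by
  have hp : p.Prime := Fact.out
  set sp := Submodule.span K (Set.range (pfCoeff (p := p) a)) with hsp
  have hone : (1 : F) ∈ sp := by
    refine Submodule.subset_span ⟨0, ?_⟩
    simp [pfCoeff]
  have hmulle : sp * sp ≤ sp := by
    rw [hsp, Submodule.span_mul_span]
    refine Submodule.span_le.2 ?_
    rintro z ⟨x, ⟨e, rfl⟩, y, ⟨f, rfl⟩, rfl⟩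
    show pfCoeff a e * pfCoeff a f ∈ _
    obtain ⟨w, hw⟩ := pfCoeff_mul_pfCoeff a e f
    have hm : w ^ p ∈ K := (mem_K_iff hK _).2 ⟨w, rfl⟩
    have h : pfCoeff a e * pfCoeff a f = (⟨w ^ p, hm⟩ : K) • pfCoeff a (e + f) := hw
    rw [h]
    exact Submodule.smul_mem _ _ (Submodule.subset_span ⟨e + f, rfl⟩)
  have hmul : ∀ x y : F, x ∈ sp → y ∈ sp → x * y ∈ sp := fun x y hx hy =>
    hmulle (Submodule.mul_mem_mul hx hy)
  set S : Subalgebra K F := Submodule.toSubalgebra sp hone hmul with hS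
  have hrange : Set.range a ⊆ (S : Set F) := by
    rintro _ ⟨j, rfl⟩
    refine Submodule.subset_span ⟨Pi.single j 1, ?_⟩
    rw [pfCoeff]
    rw [Fintype.prod_eq_single j (fun i hij => by simp [Pi.single_eq_of_ne hij])]
    rw [Pi.single_eq_same, Fin.val_one', Nat.mod_eq_of_lt hp.one_lt, pow_one]
  have halg : ∀ x ∈ Set.range a, IsAlgebraic (↥K) x := by
    intro x _
    have hm : x ^ p ∈ K := (mem_K_iff hK _).2 ⟨x, rfl⟩
    refine ⟨Polynomial.X ^ p - Polynomial.C (⟨x ^ p, hm⟩ : K),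
      (Polynomial.monic_X_pow_sub_C _ hp.ne_zero).ne_zero, ?_⟩
    have hc : (algebraMap (↥K) F) (⟨x ^ p, hm⟩ : K) = x ^ p := rfl
    simp [hc]
  have h1 : (IntermediateField.adjoin K (Set.range a)).toSubalgebra =
      Algebra.adjoin (↥K) (Set.range a) :=
    IntermediateField.adjoin_toSubalgebra_of_isAlgebraic halg
  have h2 : Algebra.adjoin (↥K) (Set.range a) = S := by
    refine le_antisymm (Algebra.adjoin_le hrange) ?_
    have h3 : sp ≤ Subalgebra.toSubmodule (Algebra.adjoin (↥K) (Set.range a)) := by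
      refine Submodule.span_le.2 ?_
      rintro _ ⟨e, rfl⟩
      show pfCoeff a e ∈ Algebra.adjoin (↥K) (Set.range a)
      rw [pfCoeff]
      exact Subalgebra.prod_mem _ fun i _ =>
        Subalgebra.pow_mem _ (Algebra.subset_adjoin (Set.mem_range_self i)) _
    exact h3
  have : (IntermediateField.adjoin K (Set.range a) : Set F) = (S : Set F) := by
    rw [← h2, ← h1]; rfl
  rw [this]; rfl
lemma powers_indep (hK : (K : Set F) = Set.range fun x : F => x ^ p)
    (L : IntermediateField (↥K) F) (c : F) (hc : c ∉ L)
    (v : Fin p → F) (hv : ∀ j, v j ∈ L)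
    (h : ∑ j : Fin p, v j * c ^ (j : ℕ) = 0) : ∀ j, v j = 0 := by
  have hp : p.Prime := Fact.out
  have hm : c ^ p ∈ K := (mem_K_iff hK _).2 ⟨c, rfl⟩
  have hcL : c ^ p ∈ L := L.algebraMap_mem (⟨c ^ p, hm⟩ : K)
  set c' : L := ⟨c ^ p, hcL⟩ with hc'
  have hnp : ∀ b : L, b ^ p ≠ c' := by
    intro b hb
    apply hc
    have hb' : (b : F) ^ p = c ^ p := congrArg Subtype.val hb
    have : frobenius F p (b : F) = frobenius F p c := by
      simpa [frobenius_def] using hb'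
    have := frobenius_inj F p this
    exact this ▸ b.2
  have hirr : Irreducible (X ^ p - C c') := X_pow_sub_C_irreducible_of_prime hp hnp
  have haev : Polynomial.aeval c (X ^ p - C c') = 0 := by
    have : algebraMap L F c' = c ^ p := rfl
    simp [this]
  have hmin : minpoly L c = X ^ p - C c' :=
    (minpoly.eq_of_irreducible_of_monic hirr haev (monic_X_pow_sub_C _ hp.ne_zero)).symm
  by_contra hcon
  push_neg at hcon
  obtain ⟨j0, hj0⟩ := hcon
  set r : Polynomial L := ∑ j : Fin p, C (⟨v j, hv j⟩ : L) * X ^ (j : ℕ) with hr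
  have hcoeff : r.coeff (j0 : ℕ) = ⟨v j0, hv j0⟩ := by
    rw [hr, Polynomial.finset_sum_coeff]
    rw [Finset.sum_eq_single j0]
    · simp
    · intro j _ hj
      have : ((j0 : ℕ) = (j : ℕ)) = False := by
        simp [Fin.val_injective.ne_iff.2 (Ne.symm hj)]
      simp [Polynomial.coeff_C_mul, Polynomial.coeff_X_pow, this]
    · intro hj; exact absurd (Finset.mem_univ j0) hj
  have hr0 : r ≠ 0 := by
    intro hz
    rw [hz, Polynomial.coeff_zero] at hcoeff
    exact hj0 (congrArg Subtype.val hcoeff.symm)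
  have haevr : Polynomial.aeval c r = 0 := by
    rw [hr]
    have : ∀ j : Fin p, algebraMap L F (⟨v j, hv j⟩ : L) = v j := fun _ => rfl
    simpa [this] using h
  have hdeg : r.degree < (p : ℕ) := by
    rw [hr]
    refine lt_of_le_of_lt (Polynomial.degree_sum_le _ _) ?_
    rw [Finset.sup_lt_iff (by exact_mod_cast WithBot.bot_lt_coe (p : ℕ))]
    intro j _
    refine lt_of_le_of_lt (Polynomial.degree_C_mul_X_pow_le _ _) ?_
    exact_mod_cast j.2
  have hle := minpoly.degree_le_of_ne_zero L c hr0 haevr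
  rw [hmin, Polynomial.degree_X_pow_sub_C hp.pos] at hle
  exact absurd (lt_of_le_of_lt hle hdeg) (lt_irrefl _)
lemma pfVal_cons {m : ℕ} (c : F) (b : Fin m → F) (x : (Fin (m + 1) → Fin p) → F) :
    pfVal p (m + 1) (Fin.cons c b) x =
      ∑ j : Fin p, (pfVal p m b fun e => x (Fin.cons j e)) * c ^ (j : ℕ) := by
  rw [pfVal]
  rw [← Equiv.sum_comp (Fin.consEquiv (fun _ : Fin (m+1) => Fin p))]
  rw [Fintype.sum_prod_type]
  refine Finset.sum_congr rfl fun j _ => ?_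
  rw [pfVal, Finset.sum_mul]
  refine Finset.sum_congr rfl fun e _ => ?_
  have h1 : ((Fin.consEquiv (fun _ : Fin (m+1) => Fin p)) (j, e)) = Fin.cons j e := rfl
  rw [h1, pfCoeff, pfCoeff, Fin.prod_univ_succ]
  simp only [Fin.cons_zero, Fin.cons_succ]
  ring

lemma exists_perm_extend {n m : ℕ} (hm : m ≤ n) (f : Fin m → Fin n)
    (hf : Function.Injective f) :
    ∃ σ : Equiv.Perm (Fin n), ∀ i, σ (Fin.castLE hm i) = f i := by
  classical
  have hg : Function.Injective (Fin.castLE hm) := Fin.castLE_injective hm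
  let e : { x // x ∈ Set.range (Fin.castLE hm) } ≃ { x // x ∈ Set.range f } :=
    (Equiv.ofInjective _ hg).symm.trans (Equiv.ofInjective f hf)
  refine ⟨e.extendSubtype, fun i => ?_⟩
  rw [e.extendSubtype_apply_of_mem _ ⟨i, rfl⟩]
  show ((Equiv.ofInjective f hf) ((Equiv.ofInjective _ hg).symm ⟨Fin.castLE hm i, ⟨i, rfl⟩⟩) : Fin n) = f i
  rw [Equiv.ofInjective_symm_apply]
  simp [Equiv.ofInjective_apply]
lemma range_pfVal_eq_adjoin (hK : (K : Set F) = Set.range fun x : F => x ^ p)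
    {n : ℕ} (a : Fin n → F) :
    Set.range (pfVal p n a) = (IntermediateField.adjoin K (Set.range a) : Set F) :=
  (range_pfVal_eq_span hK a).trans (span_pfCoeff_eq_adjoin hK a)

lemma main_ind (hK : (K : Set F) = Set.range fun x : F => x ^ p) :
    ∀ (n : ℕ) (a : Fin n → F), ∃ (m : ℕ) (hm : m ≤ n) (f : Fin m → Fin n),
      Function.Injective f ∧
      (∀ x, pfVal p m (a ∘ f) x = 0 → x = 0) ∧
      Set.range (pfVal p m (a ∘ f)) = Set.range (pfVal p n a) := by
  have hp : p.Prime := Fact.out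
  intro n
  induction n with
  | zero =>
    intro a
    refine ⟨0, le_refl 0, id, Function.injective_id, ?_, rfl⟩
    intro x hx
    rw [pfVal, Fintype.sum_unique] at hx
    simp only [pfCoeff, Finset.univ_eq_empty, Finset.prod_empty, one_mul,
      pow_eq_zero_iff hp.ne_zero] at hx
    funext e
    rw [Pi.zero_apply]
    exact (congrArg x (Subsingleton.elim e _)).trans hx
  | succ n IH =>
    intro a
    obtain ⟨m, hm, f, hinj, hani, hrange⟩ := IH (a ∘ Fin.succ)
    by_cases ha0 : a 0 ∈ Set.range (pfVal p n (a ∘ Fin.succ))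
    · -- a 0 already represented
      refine ⟨m, hm.trans (Nat.le_succ n), Fin.succ ∘ f,
        (Fin.succ_injective n).comp hinj, hani, ?_⟩
      have key : Set.range (pfVal p n (a ∘ Fin.succ)) = Set.range (pfVal p (n+1) a) := by
        rw [range_pfVal_eq_adjoin hK (a ∘ Fin.succ), range_pfVal_eq_adjoin hK a]
        have hr : Set.range a = insert (a 0) (Set.range (a ∘ Fin.succ)) := by
          conv_lhs => rw [← Fin.cons_self_tail a]
          exact Fin.range_cons _ _
        have ha0' : a 0 ∈ IntermediateField.adjoin K (Set.range (a ∘ Fin.succ)) := by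
          rw [← SetLike.mem_coe, ← range_pfVal_eq_adjoin hK]; exact ha0
        congr 1
        rw [hr]
        refine le_antisymm (IntermediateField.adjoin.mono _ _ _ (Set.subset_insert _ _)) ?_
        refine IntermediateField.adjoin_le_iff.2 ?_
        rw [Set.insert_subset_iff]
        exact ⟨ha0', IntermediateField.subset_adjoin _ _⟩
      exact hrange.trans key
    · -- a 0 not represented: extend
      set L := IntermediateField.adjoin K (Set.range (a ∘ Fin.succ)) with hLdef
      have hA1 : Set.range (pfVal p n (a ∘ Fin.succ)) = (L : Set F) :=
        range_pfVal_eq_adjoin hK _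
      have hrangeL : Set.range (pfVal p m ((a ∘ Fin.succ) ∘ f)) = (L : Set F) :=
        hrange.trans hA1
      have hc : a 0 ∉ L := by
        rw [hA1] at ha0; exact ha0
      set f' : Fin (m + 1) → Fin (n + 1) := Fin.cons 0 (Fin.succ ∘ f) with hf'
      have hb' : a ∘ f' = Fin.cons (a 0) ((a ∘ Fin.succ) ∘ f) := by
        funext i
        refine Fin.cases ?_ (fun k => ?_) i <;> simp [hf']
      have hinj' : Function.Injective f' := by
        intro i j
        revert j
        refine Fin.cases ?_ (fun k => ?_) i <;> intro j <;>
          refine Fin.cases ?_ (fun l => ?_) j <;> intro hij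
        · rfl
        · simp only [hf', Fin.cons_zero, Fin.cons_succ, Function.comp_apply] at hij
          exact absurd hij.symm (Fin.succ_ne_zero _)
        · simp only [hf', Fin.cons_zero, Fin.cons_succ, Function.comp_apply] at hij
          exact absurd hij (Fin.succ_ne_zero _)
        · simp only [hf', Fin.cons_succ, Function.comp_apply] at hij
          exact congrArg Fin.succ (hinj (Fin.succ_injective n hij))
      refine ⟨m + 1, Nat.succ_le_succ hm, f', hinj', ?_, ?_⟩
      · intro x hx
        rw [show pfVal p (m+1) (a ∘ f') x = pfVal p (m+1) (Fin.cons (a 0) ((a ∘ Fin.succ) ∘ f)) x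
            from by rw [hb'], pfVal_cons] at hx
        have hzero := powers_indep hK L (a 0) hc _
          (fun j => by rw [← SetLike.mem_coe, ← hrangeL]; exact Set.mem_range_self _) hx
        funext E
        have hE := congrFun (hani _ (hzero (E 0))) (Fin.tail E)
        simpa [Fin.cons_self_tail] using hE
      · rw [range_pfVal_eq_adjoin hK (a ∘ f'), range_pfVal_eq_adjoin hK a]
        have hadj : IntermediateField.adjoin K (Set.range ((a ∘ Fin.succ) ∘ f)) = L :=
          SetLike.coe_injective
            ((range_pfVal_eq_adjoin hK ((a ∘ Fin.succ) ∘ f)).symm.trans hrangeL)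
        have hr1 : Set.range (a ∘ f') = insert (a 0) (Set.range ((a ∘ Fin.succ) ∘ f)) := by
          rw [hb']; exact Fin.range_cons _ _
        have hr2 : Set.range a = insert (a 0) (Set.range (a ∘ Fin.succ)) := by
          conv_lhs => rw [← Fin.cons_self_tail a]
          exact Fin.range_cons _ _
        congr 1
        rw [hr1, hr2, Set.insert_eq, Set.insert_eq,
          IntermediateField.adjoin_union, IntermediateField.adjoin_union, hadj]
lemma pfCoeff_linearIndependent (hK : (K : Set F) = Set.range fun x : F => x ^ p)
    {m : ℕ} (b : Fin m → F) (hani : ∀ x, pfVal p m b x = 0 → x = 0) :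
    LinearIndependent (↥K) (pfCoeff (p := p) b) := by
  have hp : p.Prime := Fact.out
  rw [Fintype.linearIndependent_iff]
  intro g hg j
  choose y hy using fun e => (mem_K_iff hK ((g e : F))).1 (g e).2
  have hv : pfVal p m b y = 0 := by
    rw [pfVal, ← hg]
    refine Finset.sum_congr rfl fun e _ => ?_
    rw [hy e]
    exact mul_comm _ _
  have hy0 := hani y hv
  apply Subtype.ext
  rw [← hy j, congrFun hy0 j]
  simp [zero_pow hp.ne_zero]

lemma finrank_eq (hK : (K : Set F) = Set.range fun x : F => x ^ p)
    {n m : ℕ} (a : Fin n → F) (b : Fin m → F)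
    (hani : ∀ x, pfVal p m b x = 0 → x = 0)
    (hrange : Set.range (pfVal p m b) = Set.range (pfVal p n a)) :
    (p : ℕ) ^ m = Module.finrank (↥K) (IntermediateField.adjoin (↥K) (Set.range a)) := by
  classical
  set L := IntermediateField.adjoin (↥K) (Set.range a) with hL
  have hspan : (Submodule.span (↥K) (Set.range (pfCoeff (p := p) b)) : Set F) = (L : Set F) :=
    (range_pfVal_eq_span hK b).symm.trans (hrange.trans (range_pfVal_eq_adjoin hK a))
  have hind : LinearIndependent (↥K) (pfCoeff (p := p) b) :=
    pfCoeff_linearIndependent hK b hani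
  set G : (Fin m → Fin p) → L := fun e =>
    ⟨pfCoeff b e, by
      rw [← SetLike.mem_coe, ← hspan]
      exact Submodule.subset_span (Set.mem_range_self e)⟩ with hG
  have hcomp : (L.val.toLinearMap ∘ G) = pfCoeff (p := p) b := rfl
  have hindG : LinearIndependent (↥K) G :=
    LinearIndependent.of_comp (L.val.toLinearMap) (by rw [hcomp]; exact hind)
  have hspanG : ⊤ ≤ Submodule.span (↥K) (Set.range G) := by
    intro z _
    have hz : (z : F) ∈ (Submodule.span (↥K) (Set.range (pfCoeff (p := p) b)) : Set F) := by
      rw [hspan]; exact z.2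
    rw [SetLike.mem_coe, Submodule.mem_span_range_iff_exists_fun] at hz
    obtain ⟨c, hc⟩ := hz
    rw [Submodule.mem_span_range_iff_exists_fun]
    refine ⟨c, ?_⟩
    apply Subtype.ext
    rw [← hc]
    show L.val.toLinearMap (∑ e, c e • G e) = _
    rw [map_sum]
    refine Finset.sum_congr rfl fun e _ => ?_
    rw [map_smul]
    rfl
  let B : Module.Basis (Fin m → Fin p) (↥K) L := Module.Basis.mk hindG hspanG
  rw [Module.finrank_eq_card_basis B, Fintype.card_fun]
  simp

end QPAux

/-- The anisotropic part of a quasi-Pfister form `π = ⟪a₁,…,aₙ⟫` over a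
field `F` of characteristic `p` is again a quasi-Pfister form: after reordering the
`aᵢ` by a permutation `σ`, one has `π_an ≅ ⟪a_{σ(1)},…,a_{σ(m)}⟫` where
`p^m = [F^p(a₁,…,aₙ) : F^p]`.  The isomorphism `π_an ≅ ⟪…⟫` is expressed by the
characterizing property of the anisotropic part: `⟪a_{σ(1)},…,a_{σ(m)}⟫` is
anisotropic and represents exactly the same values as `π`. -/
theorem stmt6 {p : ℕ} [Fact p.Prime] (F : Type*) [Field F] [CharP F p]
    (K : Subfield F) (hK : (K : Set F) = Set.range fun x : F => x ^ p)
    (n : ℕ) (a : Fin n → F) :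
    ∃ (m : ℕ) (hm : m ≤ n) (σ : Equiv.Perm (Fin n)),
      (p : ℕ) ^ m = Module.finrank K (IntermediateField.adjoin K (Set.range a)) ∧
      (∀ x, pfVal p m (fun i => a (σ (Fin.castLE hm i))) x = 0 → x = 0) ∧
      Set.range (pfVal p m (fun i => a (σ (Fin.castLE hm i)))) =
        Set.range (pfVal p n a) := by
  obtain ⟨m, hm, f, hinj, hani, hrange⟩ := main_ind hK n a
  obtain ⟨σ, hσ⟩ := exists_perm_extend hm f hinj
  have hfun : (fun i => a (σ (Fin.castLE hm i))) = a ∘ f :=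
    funext fun i => congrArg a (hσ i)
  refine ⟨m, hm, σ, ?_, ?_, ?_⟩
  · exact finrank_eq hK a (a ∘ f) hani hrange
  · rw [hfun]; exact hani
  · rw [hfun]; exact hrange
end

section
/- Let φ be a quasilinear p-form over a field F of characteristic p, and let L be a separable field extension of F. If φ is anisotropic over F, then φ_L (the scalar extension of φ to L) is anisotropic over L. -/
open scoped BigOperators TensorProduct

/-- Let `φ` be a quasilinear `p`-form over a field `F` of characteristic
`p` (modeled, up to isomorphism, as a diagonal form `x ↦ Σ aᵢ xᵢ^p`) and let `L/F` be
a separable field extension (i.e. `L ⊗_F F̄` is reduced for an algebraic closure `F̄`).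
If `φ` is anisotropic over `F`, then the scalar extension `φ_L` is anisotropic. -/
theorem stmt7 {p : ℕ} [Fact p.Prime] (F : Type*) [Field F] [CharP F p]
    (L : Type*) [Field L] [Algebra F L]
    (hsep : IsReduced (L ⊗[F] (AlgebraicClosure F)))
    (n : ℕ) (a : Fin n → F)
    (haniso : ∀ x : Fin n → F, ∑ i, a i * x i ^ p = 0 → x = 0) :
    ∀ x : Fin n → L, ∑ i, algebraMap F L (a i) * x i ^ p = 0 → x = 0 := by
  intro x hx
  set K := AlgebraicClosure F with hK
  have hp : 0 < p := (Fact.out (p := p.Prime)).pos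
  -- choose p-th roots of the aᵢ in the algebraic closure
  have hb : ∀ i, ∃ b : K, b ^ p = algebraMap F K (a i) := fun i =>
    IsAlgClosed.exists_pow_nat_eq _ hp
  choose b hbp using hb
  -- the roots are linearly independent over F
  have hli : LinearIndependent F b := by
    rw [Fintype.linearIndependent_iff]
    intro g hg
    have hgp : (∑ i, g i • b i) ^ p = 0 := by rw [hg]; exact zero_pow hp.ne'
    rw [sum_pow_char] at hgp
    have : algebraMap F K (∑ i, a i * g i ^ p) = 0 := by
      rw [map_sum]
      rw [← hgp]
      refine Finset.sum_congr rfl fun i _ => ?_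
      rw [smul_pow, hbp, map_mul, map_pow, Algebra.smul_def, map_pow]; ring
    have h0 : (∑ i, a i * g i ^ p) = 0 :=
      (map_eq_zero_iff _ (algebraMap F K).injective).mp this
    have := haniso g h0
    intro i; exact congrFun this i
  -- the tensor element
  set t : L ⊗[F] K := ∑ i, x i ⊗ₜ[F] b i with ht
  have htp : t = 0 := by
    rcases subsingleton_or_nontrivial (L ⊗[F] K) with hsub | hnt
    · exact Subsingleton.elim _ _
    · haveI : CharP (L ⊗[F] K) p :=
        charP_of_injective_algebraMap (algebraMap F (L ⊗[F] K)).injective p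
      have h1 : t ^ p = 0 := by
        rw [ht, sum_pow_char]
        have : ∀ i, (x i ⊗ₜ[F] b i) ^ p = (algebraMap F L (a i) * x i ^ p) ⊗ₜ[F] (1 : K) := by
          intro i
          rw [Algebra.TensorProduct.tmul_pow, hbp]
          rw [show (algebraMap F K (a i)) = a i • (1 : K) by rw [Algebra.algebraMap_eq_smul_one]]
          rw [TensorProduct.tmul_smul, TensorProduct.smul_tmul', Algebra.smul_def]
        rw [Finset.sum_congr rfl fun i _ => this i, ← TensorProduct.sum_tmul, hx,
          TensorProduct.zero_tmul]
      exact hsep.eq_zero t ⟨p, h1⟩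
  -- extract coefficients: b linearly independent over F forces x = 0
  have hker : LinearMap.ker (Finsupp.linearCombination F b) = ⊥ :=
    LinearMap.ker_eq_bot.mpr hli
  obtain ⟨g, hg⟩ := (Finsupp.linearCombination F b).exists_leftInverse_of_injective hker
  funext j
  have key : (TensorProduct.rid F L).toLinearMap.comp
      (LinearMap.lTensor L ((Finsupp.lapply j).comp g)) t = x j := by
    rw [ht, map_sum]
    have : ∀ i, (TensorProduct.rid F L).toLinearMap.comp
        (LinearMap.lTensor L ((Finsupp.lapply j).comp g)) (x i ⊗ₜ[F] b i)
        = (if i = j then (1:F) else 0) • x i := by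
      intro i
      have hbi : g (b i) = Finsupp.single i 1 := by
        have : Finsupp.linearCombination F b (Finsupp.single i 1) = b i := by
          simp [Finsupp.linearCombination_single]
        rw [← this]
        exact congrFun (congrArg DFunLike.coe hg) (Finsupp.single i 1)
      simp only [LinearMap.coe_comp, Function.comp_apply, LinearMap.lTensor_tmul,
        LinearEquiv.coe_coe, TensorProduct.rid_tmul, hbi, Finsupp.lapply_apply,
        Finsupp.single_apply]
    rw [Finset.sum_congr rfl fun i _ => this i]
    simp [Finset.sum_ite_eq]
  rw [htp] at key
  simp only [map_zero] at key
  rw [← key]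
  rfl
end

section
/- Let φ be a quasilinear p-form over a field F of characteristic p and a ∈ F \ F^p. Then p · i₀(φ_{F(a^{1/p})}) = i₀(⟪a⟫ ⊗ φ), where i₀ denotes the defect index. Consequently, if φ is anisotropic over F, then dim (φ_{F(a^{1/p})})_an ≥ (1/p)·dim φ. -/
open scoped BigOperators

/-- Defect index of the diagonal quasilinear `p`-form with coefficients `b`: the
dimension of the (sub)space of isotropic vectors (which is spanned by them). -/
noncomputable def defectIdx (p : ℕ) (K : Type*) [Field K] {ι : Type*} [Fintype ι]
    (b : ι → K) : ℕ :=
  Module.finrank K (Submodule.span K {x : ι → K | ∑ i, b i * x i ^ p = 0})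

/-- The set of isotropic vectors of a diagonal quasilinear `p`-form is a subspace. -/
def isoSub (p : ℕ) [Fact p.Prime] (K : Type*) [Field K] [CharP K p]
    {ι : Type*} [Fintype ι] (b : ι → K) : Submodule K (ι → K) where
  carrier := {x : ι → K | ∑ i, b i * x i ^ p = 0}
  add_mem' := by
    intro x y hx hy
    have hp : p ≠ 0 := (Fact.out : p.Prime).ne_zero
    simp only [Set.mem_setOf_eq] at *
    have : ∀ i, b i * (x i + y i) ^ p = b i * x i ^ p + b i * y i ^ p := by
      intro i
      rw [add_pow_char, mul_add]
    simp only [Pi.add_apply, this, Finset.sum_add_distrib, hx, hy, add_zero]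
  zero_mem' := by
    have hp : p ≠ 0 := (Fact.out : p.Prime).ne_zero
    simp [zero_pow hp]
  smul_mem' := by
    intro t x hx
    simp only [Set.mem_setOf_eq] at *
    have : ∀ i, b i * (t * x i) ^ p = t ^ p * (b i * x i ^ p) := by
      intro i; rw [mul_pow]; ring
    simp only [Pi.smul_apply, smul_eq_mul, this, ← Finset.mul_sum, hx, mul_zero]

lemma defectIdx_eq_finrank_isoSub (p : ℕ) [Fact p.Prime] (K : Type*) [Field K] [CharP K p]
    {ι : Type*} [Fintype ι] (b : ι → K) :
    defectIdx p K b = Module.finrank K (isoSub p K b) := by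
  have : {x : ι → K | ∑ i, b i * x i ^ p = 0} = ↑(isoSub p K b) := rfl
  rw [defectIdx, this, Submodule.span_eq]

/-- Let `φ` be a quasilinear `p`-form over `F` (char `p`), `a ∈ F \ F^p`,
and `F_a = F(a^{1/p})` the purely inseparable degree-`p` extension (a field `L`
generated over `F` by an element `α` with `α^p = a`).  Then
`p · i₀(φ_{F_a}) = i₀(⟪a⟫ ⊗ φ)`, where `⟪a⟫ ⊗ φ` has coefficients `a^j · cᵢ`
(`0 ≤ j < p`).  Consequently, if `φ` is anisotropic then
`dim (φ_{F_a})_an ≥ (dim φ)/p`, i.e. `p · (dim φ − i₀(φ_{F_a})) ≥ dim φ`. -/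
theorem stmt8 {p : ℕ} [Fact p.Prime] (F : Type*) [Field F] [CharP F p]
    (a : F) (ha : a ∉ Set.range fun x : F => x ^ p)
    (L : Type*) [Field L] [Algebra F L]
    (α : L) (hα : α ^ p = algebraMap F L a) (hgen : Algebra.adjoin F {α} = ⊤)
    (n : ℕ) (c : Fin n → F) :
    p * defectIdx p L (fun i => algebraMap F L (c i)) =
      defectIdx p F (fun ji : Fin p × Fin n => a ^ (ji.1 : ℕ) * c ji.2) ∧
    ((∀ x : Fin n → F, ∑ i, c i * x i ^ p = 0 → x = 0) →
      p * (n - defectIdx p L (fun i => algebraMap F L (c i))) ≥ n) := by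
  classical
  have hp : p.Prime := Fact.out
  have hp0 : p ≠ 0 := hp.ne_zero
  have hinj : Function.Injective (algebraMap F L) := (algebraMap F L).injective
  haveI : CharP L p := charP_of_injective_algebraMap hinj p
  -- the minimal polynomial of α is X^p - a
  have hirr : Irreducible (Polynomial.X ^ p - Polynomial.C a) :=
    X_pow_sub_C_irreducible_of_prime hp (fun b hb => ha ⟨b, hb⟩)
  have haev : (Polynomial.aeval α) (Polynomial.X ^ p - Polynomial.C a) = 0 := by
    simp [hα]
  have hmon : (Polynomial.X ^ p - Polynomial.C a).Monic :=
    Polynomial.monic_X_pow_sub_C a hp0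
  have hint : IsIntegral F α := ⟨_, hmon, haev⟩
  have hmin : minpoly F α = Polynomial.X ^ p - Polynomial.C a :=
    (minpoly.eq_of_irreducible_of_monic hirr haev hmon).symm
  -- power basis of L over F
  let eqv : ↥(Algebra.adjoin F {α}) ≃ₐ[F] L :=
    (Subalgebra.equivOfEq _ _ hgen).trans Subalgebra.topEquiv
  let pb : PowerBasis F L := (Algebra.adjoin.powerBasis hint).map eqv
  have hpbgen : pb.gen = α := by
    simp [pb, eqv, PowerBasis.map_gen, Algebra.adjoin.powerBasis_gen]
  have hdim : pb.dim = p := by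
    show ((Algebra.adjoin.powerBasis hint).map eqv).dim = p
    rw [PowerBasis.map_dim, Algebra.adjoin.powerBasis_dim, hmin,
      Polynomial.natDegree_X_pow_sub_C]
  have hfr : Module.finrank F L = p := by rw [pb.finrank, hdim]
  -- basis of L over F by powers of α
  let B : Module.Basis (Fin p) F L := pb.basis.reindex (finCongr hdim)
  have hB : ∀ j : Fin p, B j = α ^ (j : ℕ) := by
    intro j
    rw [Module.Basis.reindex_apply, PowerBasis.coe_basis, hpbgen]
    rfl
  -- the linear equivalence between F^(p×n) and L^n
  let Φ : (Fin p × Fin n → F) ≃ₗ[F] (Fin n → L) :=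
    (LinearEquiv.funCongrLeft F F (Equiv.prodComm (Fin n) (Fin p))).trans
      ((LinearEquiv.curry F F (Fin n) (Fin p)).trans
        (LinearEquiv.piCongrRight (fun _ : Fin n => B.equivFun.symm)))
  have hΦ : ∀ (x : Fin p × Fin n → F) (i : Fin n),
      Φ x i = ∑ j : Fin p, algebraMap F L (x (j, i)) * α ^ (j : ℕ) := by
    intro x i
    simp only [Φ, LinearEquiv.trans_apply, LinearEquiv.funCongrLeft_apply,
      LinearEquiv.piCongrRight_apply, Module.Basis.equivFun_symm_apply]
    rw [Finset.sum_congr rfl (fun j _ => ?_)]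
    rw [hB j, Algebra.smul_def]
    rfl
  -- key computation
  have key : ∀ x : Fin p × Fin n → F,
      (∑ i, algebraMap F L (c i) * (Φ x i) ^ p) =
        algebraMap F L (∑ ji : Fin p × Fin n, a ^ (ji.1 : ℕ) * c ji.2 * x ji ^ p) := by
    intro x
    have hterm : ∀ i : Fin n, (Φ x i) ^ p =
        algebraMap F L (∑ j : Fin p, a ^ (j : ℕ) * x (j, i) ^ p) := by
      intro i
      rw [hΦ, sum_pow_char, map_sum]
      refine Finset.sum_congr rfl (fun j _ => ?_)
      rw [mul_pow, ← map_pow, pow_right_comm, hα, ← map_pow, ← map_mul, map_mul, map_mul]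
      ring
    calc (∑ i, algebraMap F L (c i) * (Φ x i) ^ p)
        = algebraMap F L (∑ i, c i * ∑ j : Fin p, a ^ (j : ℕ) * x (j, i) ^ p) := by
          rw [map_sum]
          exact Finset.sum_congr rfl (fun i _ => by rw [hterm, ← map_mul])
      _ = algebraMap F L (∑ ji : Fin p × Fin n, a ^ (ji.1 : ℕ) * c ji.2 * x ji ^ p) := by
          congr 1
          rw [Fintype.sum_prod_type, Finset.sum_comm]
          refine Finset.sum_congr rfl (fun i _ => ?_)
          rw [Finset.mul_sum]
          exact Finset.sum_congr rfl (fun j _ => by ring)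
  -- the two isotropic subspaces
  set SL : Submodule L (Fin n → L) := isoSub p L (fun i => algebraMap F L (c i)) with hSL
  set SF : Submodule F (Fin p × Fin n → F) :=
    isoSub p F (fun ji : Fin p × Fin n => a ^ (ji.1 : ℕ) * c ji.2) with hSF
  have hmem : ∀ x : Fin p × Fin n → F, Φ x ∈ SL ↔ x ∈ SF := by
    intro x
    show (∑ i, algebraMap F L (c i) * (Φ x i) ^ p = 0) ↔
      (∑ ji : Fin p × Fin n, a ^ (ji.1 : ℕ) * c ji.2 * x ji ^ p = 0)
    rw [key]
    constructor
    · intro h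
      exact hinj (by rw [h, map_zero])
    · intro h; rw [h, map_zero]
  have hmap : Submodule.map (Φ : (Fin p × Fin n → F) →ₗ[F] (Fin n → L)) SF
      = SL.restrictScalars F := by
    ext y
    rw [Submodule.mem_map_equiv, Submodule.restrictScalars_mem,
      ← hmem (Φ.symm y), Φ.apply_symm_apply]
  -- Part 1
  have hdL : defectIdx p L (fun i => algebraMap F L (c i)) = Module.finrank L SL :=
    defectIdx_eq_finrank_isoSub p L _
  have hdF : defectIdx p F (fun ji : Fin p × Fin n => a ^ (ji.1 : ℕ) * c ji.2)
      = Module.finrank F SF := defectIdx_eq_finrank_isoSub p F _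
  have htower : Module.finrank F L * Module.finrank L SL
      = Module.finrank F (SL.restrictScalars F) := by
    exact Module.finrank_mul_finrank F L SL
  have part1 : p * defectIdx p L (fun i => algebraMap F L (c i)) =
      defectIdx p F (fun ji : Fin p × Fin n => a ^ (ji.1 : ℕ) * c ji.2) := by
    rw [hdL, hdF, ← LinearEquiv.finrank_map_eq Φ SF, hmap, ← htower, hfr]
  refine ⟨part1, ?_⟩
  -- Part 2
  intro haniso
  -- the embedded copy of F^n
  let ι : (Fin n → F) →ₗ[F] (Fin p × Fin n → F) :=
    { toFun := fun y ji => if ji.1 = 0 then y ji.2 else 0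
      map_add' := by
        intro y z; funext ji; by_cases h : ji.1 = 0 <;> simp [h]
      map_smul' := by
        intro t y; funext ji; by_cases h : ji.1 = 0 <;> simp [h] }
  have hι_inj : Function.Injective ι := by
    intro y z h
    funext i
    have := congrFun h (0, i)
    simpa [ι] using this
  set U : Submodule F (Fin p × Fin n → F) := LinearMap.range ι with hU
  have hUrank : Module.finrank F U = n := by
    rw [hU, LinearMap.finrank_range_of_inj hι_inj, Module.finrank_pi, Fintype.card_fin]
  have hinf : SF ⊓ U = ⊥ := by
    rw [eq_bot_iff]
    rintro x ⟨hx1, y, rfl⟩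
    have hx1' : ∑ ji : Fin p × Fin n, a ^ (ji.1 : ℕ) * c ji.2 * (ι y ji) ^ p = 0 := hx1
    have hsum : ∑ ji : Fin p × Fin n, a ^ (ji.1 : ℕ) * c ji.2 * (ι y ji) ^ p
        = ∑ i, c i * y i ^ p := by
      rw [Fintype.sum_prod_type]
      rw [Finset.sum_eq_single (0 : Fin p)]
      · simp [ι]
      · intro j _ hj
        apply Finset.sum_eq_zero
        intro i _
        simp [ι, hj, zero_pow hp0]
      · simp
    have hy : y = 0 := haniso y (by rw [← hsum]; exact hx1')
    have : ι y = 0 := by rw [hy, map_zero]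
    simp [this]
  have hdimsum : Module.finrank F SF + n ≤ p * n := by
    have hcard : Module.finrank F (Fin p × Fin n → F) = p * n := by
      rw [Module.finrank_pi, Fintype.card_prod, Fintype.card_fin, Fintype.card_fin]
    have h1 := Submodule.finrank_sup_add_finrank_inf_eq SF U
    have h2 : Module.finrank F ↥(SF ⊔ U) ≤ p * n := by
      rw [← hcard]; exact Submodule.finrank_le _
    rw [hinf, hUrank, finrank_bot] at h1
    omega
  have hpd : p * defectIdx p L (fun i => algebraMap F L (c i)) = Module.finrank F SF := by
    rw [part1, hdF]
  rw [ge_iff_le, Nat.mul_sub]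
  apply Nat.le_sub_of_add_le
  calc n + p * defectIdx p L (fun i => algebraMap F L (c i))
      = Module.finrank F SF + n := by rw [hpd, Nat.add_comm]
    _ ≤ p * n := hdimsum
end

section
/- Let φ be an anisotropic quasilinear p-form over a field F of characteristic p and a ∈ F \ F^p. If φ becomes isotropic over F(a^{1/p}), then a ∈ D(φ_qp), i.e., a lies in the field F^p(a₂/a₁, ..., aₙ/a₁) generated over F^p by the ratios of the coefficients of any diagonalization φ ≅ ⟨a₁,...,aₙ⟩ with a₁ ≠ 0. -/
set_option synthInstance.maxHeartbeats 800000
set_option maxHeartbeats 1000000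

open scoped BigOperators
open Polynomial

/-- Let `φ ≅ ⟨c₀,…,c_{n-1}⟩` (with `c₀ ≠ 0`) be an anisotropic quasilinear
`p`-form of dimension `n > 1` over a field `F` of characteristic `p`, and `a ∈ F ∖ F^p`.
If `φ` becomes isotropic over `F(a^{1/p})` (a field `L` generated over `F` by `α` with
`α^p = a`), then `a ∈ D(φ_qp) = F^p(c₁/c₀, …, c_{n-1}/c₀)`, the field generated over
the subfield `K = F^p` by the ratios of the coefficients. -/
theorem stmt9 {p : ℕ} [Fact p.Prime] (F : Type*) [Field F] [CharP F p]
    (K : Subfield F) (hK : (K : Set F) = Set.range fun x : F => x ^ p)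
    (a : F) (ha : a ∉ Set.range fun x : F => x ^ p)
    (L : Type*) [Field L] [Algebra F L]
    (α : L) (hα : α ^ p = algebraMap F L a) (hgen : Algebra.adjoin F {α} = ⊤)
    (n : ℕ) (hn : 1 < n) (c : Fin n → F) (hc0 : c ⟨0, by omega⟩ ≠ 0)
    (haniso : ∀ x : Fin n → F, ∑ i, c i * x i ^ p = 0 → x = 0)
    (hiso : ∃ x : Fin n → L, x ≠ 0 ∧ ∑ i, algebraMap F L (c i) * x i ^ p = 0) :
    a ∈ IntermediateField.adjoin K (Set.range fun i => c i / c ⟨0, by omega⟩) := by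
  have hpp : p.Prime := Fact.out
  have hp : 0 < p := hpp.pos
  obtain ⟨x, hx0, hxsum⟩ := hiso
  haveI : CharP L p := charP_of_injective_algebraMap (algebraMap F L).injective p
  set c0 : F := c ⟨0, by omega⟩ with hc0def
  -- decompose each x i as a polynomial in α of degree < p
  have hmon : (X ^ p - C a : F[X]).Monic := monic_X_pow_sub_C a hp.ne'
  have hmne1 : (X ^ p - C a : F[X]) ≠ 1 := by
    intro h
    have := natDegree_X_pow_sub_C (n := p) (r := a)
    rw [h, natDegree_one] at this
    omega
  have hxr : ∀ i, ∃ r : F[X], r.natDegree < p ∧ Polynomial.aeval α r = x i := by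
    intro i
    have hmem : x i ∈ Algebra.adjoin F {α} := hgen ▸ Algebra.mem_top
    rw [Algebra.adjoin_singleton_eq_range_aeval] at hmem
    obtain ⟨q, hq⟩ := hmem
    refine ⟨q %ₘ (X ^ p - C a), ?_, ?_⟩
    · have := natDegree_modByMonic_lt q hmon hmne1
      rwa [natDegree_X_pow_sub_C] at this
    · have hdiv := modByMonic_add_div q (X ^ p - C a)
      have : Polynomial.aeval α (X ^ p - C a : F[X]) = 0 := by
        simp [hα]
      calc Polynomial.aeval α (q %ₘ (X ^ p - C a))
          = Polynomial.aeval α (q %ₘ (X ^ p - C a) + (X ^ p - C a) * (q /ₘ (X ^ p - C a))) := by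
            rw [map_add, map_mul, this, zero_mul, add_zero]
        _ = Polynomial.aeval α q := by rw [hdiv]
        _ = x i := hq
  choose r hrdeg hrx using hxr
  set y : Fin n → ℕ → F := fun i j => (r i).coeff j with hy
  have hxp : ∀ i, x i ^ p = algebraMap F L (∑ j ∈ Finset.range p, y i j ^ p * a ^ j) := by
    intro i
    rw [← hrx i, Polynomial.aeval_eq_sum_range' (hrdeg i), sum_pow_char, map_sum]
    refine Finset.sum_congr rfl fun j _ => ?_
    rw [_root_.smul_pow, ← pow_mul, mul_comm j p, pow_mul, hα, Algebra.smul_def, ← map_pow, ← map_mul]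
  set b : ℕ → F := fun j => ∑ i, c i * y i j ^ p with hb
  have hFeq : ∑ j ∈ Finset.range p, b j * a ^ j = 0 := by
    apply (algebraMap F L).injective
    rw [map_zero, ← hxsum]
    calc algebraMap F L (∑ j ∈ Finset.range p, b j * a ^ j)
        = algebraMap F L (∑ i, c i * ∑ j ∈ Finset.range p, y i j ^ p * a ^ j) := by
          congr 1
          simp only [hb, Finset.sum_mul, Finset.mul_sum, mul_assoc]
          rw [Finset.sum_comm]
      _ = ∑ i, algebraMap F L (c i) * x i ^ p := by
          rw [map_sum]
          exact Finset.sum_congr rfl fun i _ => by rw [map_mul, hxp i]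
  have hbj : ∃ j ∈ Finset.range p, b j ≠ 0 := by
    by_contra h
    push_neg at h
    apply hx0
    funext i
    have hri : r i = 0 := by
      ext j
      rcases lt_or_ge j p with hj | hj
      · have h0 := haniso (fun i => y i j) (h j (Finset.mem_range.mpr hj))
        simpa using congrFun h0 i
      · exact coeff_eq_zero_of_natDegree_lt ((hrdeg i).trans_le hj)
    rw [← hrx i, hri, map_zero, Pi.zero_apply]
  obtain ⟨j0, hj0p, hbj0⟩ := hbj
  set M := IntermediateField.adjoin K (Set.range fun i => c i / c0) with hM
  show a ∈ M
  have hKM : ∀ z : F, z ∈ K → z ∈ M := fun z hz => by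
    have : algebraMap K F ⟨z, hz⟩ ∈ M := IntermediateField.algebraMap_mem M ⟨z, hz⟩
    exact this
  have hpowM : ∀ z : F, z ^ p ∈ M := fun z =>
    hKM _ (by rw [← SetLike.mem_coe, hK]; exact ⟨z, rfl⟩)
  have hdM : ∀ j, b j / c0 ∈ M := by
    intro j
    rw [hb]
    simp only [Finset.sum_div]
    refine Subfield.sum_mem _ fun i _ => ?_
    rw [mul_div_right_comm]
    exact mul_mem (IntermediateField.subset_adjoin _ _ ⟨i, rfl⟩) (hpowM _)
  let d : ℕ → ↥M := fun j => ⟨b j / c0, hdM j⟩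
  let q : Polynomial ↥M := ∑ j ∈ Finset.range p, Polynomial.monomial j (d j)
  have hqcoeff : ∀ j0 ∈ Finset.range p, q.coeff j0 = d j0 := by
    intro j0 hj0
    rw [finset_sum_coeff]
    rw [Finset.sum_eq_single j0]
    · simp [coeff_monomial]
    · intro j _ hjne; simp [coeff_monomial, hjne]
    · intro hne; exact absurd hj0 hne
  have hq0 : q ≠ 0 := by
    intro h
    apply hbj0
    have := hqcoeff j0 hj0p
    rw [h, coeff_zero] at this
    have : b j0 / c0 = 0 := by
      have := congrArg Subtype.val this.symm
      exact this
    exact (div_eq_zero_iff.mp this).resolve_right hc0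
  have hqdeg : q.natDegree < p := by
    have : q.natDegree ≤ p - 1 := by
      refine natDegree_sum_le_of_forall_le _ _ fun j hj => ?_
      exact (natDegree_monomial_le _).trans (by have := Finset.mem_range.mp hj; omega)
    omega
  have hqa : Polynomial.aeval a q = 0 := by
    rw [map_sum]
    have : ∀ j ∈ Finset.range p, Polynomial.aeval a (Polynomial.monomial j (d j)) =
        (b j * a ^ j) / c0 := by
      intro j _
      rw [aeval_monomial]
      have : algebraMap ↥M F (d j) = b j / c0 := rfl
      rw [this, div_mul_eq_mul_div]
    rw [Finset.sum_congr rfl this, ← Finset.sum_div, hFeq, zero_div]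
  -- integrality of a over M
  have hint : IsIntegral ↥M a := by
    refine ⟨X ^ p - C (⟨a ^ p, hpowM a⟩ : ↥M), monic_X_pow_sub_C _ hp.ne', ?_⟩
    simp [Polynomial.eval₂_sub, Polynomial.eval₂_pow]
  set g : Polynomial ↥M := minpoly ↥M a with hg
  have hdvdq : g ∣ q := minpoly.dvd _ _ hqa
  have hgdeg : g.natDegree < p := (natDegree_le_of_dvd hdvdq hq0).trans_lt hqdeg
  have hgpos : 0 < g.natDegree := minpoly.natDegree_pos hint
  set ι : ↥M →+* F := algebraMap ↥M F with hι
  have ham : Polynomial.aeval a (X ^ p - C (⟨a ^ p, hpowM a⟩ : ↥M)) = 0 := by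
    simp
  have hg_dvd : g.map ι ∣ (X - C a) ^ p := by
    have h1 := Polynomial.map_dvd ι (minpoly.dvd ↥M a ham)
    have h2 : ((X : Polynomial ↥M) ^ p - C (⟨a ^ p, hpowM a⟩ : ↥M)).map ι = (X - C a) ^ p := by
      rw [sub_pow_char, Polynomial.map_sub, Polynomial.map_pow, map_X, map_C, ← C_pow]
      rfl
    rwa [h2] at h1
  obtain ⟨dd, hdd_le, hq_assoc⟩ := (dvd_prime_pow (prime_X_sub_C a) p).mp hg_dvd
  have hg_pow : g.map ι = (X - C a) ^ dd :=
    eq_of_monic_of_associated ((minpoly.monic hint).map ι) ((monic_X_sub_C a).pow dd) hq_assoc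
  have hdd : dd = g.natDegree := by
    have h1 : (g.map ι).natDegree = g.natDegree := (minpoly.monic hint).natDegree_map ι
    rw [hg_pow, natDegree_pow, natDegree_X_sub_C, mul_one] at h1
    exact h1
  have hddpos : 0 < dd := hdd ▸ hgpos
  have hddlt : dd < p := hdd ▸ hgdeg
  have hval : ((X - C a) ^ dd).coeff (dd - 1) = (-a) * dd := by
    have h1 : (X - C a : F[X]) = X + C (-a) := by rw [map_neg, sub_eq_add_neg]
    rw [h1, coeff_X_add_C_pow]
    have h2 : dd - (dd - 1) = 1 := by omega
    have h3 : dd.choose (dd - 1) = dd := by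
      rw [← Nat.choose_symm (by omega : dd - 1 ≤ dd), h2, Nat.choose_one_right]
    rw [h2, h3, pow_one]
  have hmem : (-a) * dd ∈ M := by
    rw [← hval, ← hg_pow, Polynomial.coeff_map]
    exact SetLike.coe_mem _
  have hddF : (dd : F) ≠ 0 := by
    rw [Ne, CharP.cast_eq_zero_iff F p]
    exact fun hdvd => absurd (Nat.le_of_dvd hddpos hdvd) (by omega)
  have hfin : a = -((-a) * dd * ((dd : F))⁻¹) := by
    field_simp
  rw [hfin]
  exact neg_mem (mul_mem hmem (inv_mem (natCast_mem M dd)))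
end

section
/- Let φ be a quasilinear p-form over a field F of characteristic p, let a ∈ F \ F^p, and let m be a positive integer. If i₀(φ_{F(a^{1/p})}) ≥ m, then φ contains a subform ψ of dimension at most pm such that i₀(ψ_{F(a^{1/p})}) ≥ m. -/
open scoped BigOperators

/-- Let `φ` be a quasilinear `p`-form over `F` (char `p`), given in
diagonal form `⟨c₀,…,c_{n-1}⟩`, let `a ∈ F ∖ F^p` with purely inseparable extension
`L = F(a^{1/p})`, and `m ≥ 1`.  If `i₀(φ_L) ≥ m`, then `φ` contains a subform `ψ`
(given, up to isomorphism, by a diagonal form `⟨b₀,…,b_{k-1}⟩` embedded in `φ` by an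
injective linear map) of dimension `k ≤ p·m` with `i₀(ψ_L) ≥ m`. -/
theorem stmt10 {p : ℕ} [Fact p.Prime] (F : Type*) [Field F] [CharP F p]
    (a : F) (ha : a ∉ Set.range fun x : F => x ^ p)
    (L : Type*) [Field L] [Algebra F L]
    (α : L) (hα : α ^ p = algebraMap F L a) (hgen : Algebra.adjoin F {α} = ⊤)
    (n : ℕ) (c : Fin n → F) (m : ℕ) (hm : 0 < m)
    (h : m ≤ defectIdx p L fun i => algebraMap F L (c i)) :
    ∃ (k : ℕ) (b : Fin k → F), k ≤ p * m ∧
      (∃ f : (Fin k → F) →ₗ[F] (Fin n → F), Function.Injective f ∧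
        ∀ v : Fin k → F, ∑ i, c i * (f v) i ^ p = ∑ j, b j * v j ^ p) ∧
      m ≤ defectIdx p L fun j => algebraMap F L (b j) := by
  classical
  have hp1 : 0 < p := (Fact.out : p.Prime).pos
  have hp2 : 1 < p := (Fact.out : p.Prime).one_lt
  haveI : CharP L p := charP_of_injective_algebraMap (algebraMap F L).injective p
  haveI : ExpChar L p := ExpChar.prime (Fact.out : p.Prime)
  set g : Fin p → L := fun t => α ^ (t : ℕ) with hg
  -- Step 1 : L is spanned over F by 1, α, …, α^{p-1}
  have hspanL : ∀ x : L, x ∈ Submodule.span F (Set.range g) := by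
    have helper : ∀ s t : Fin p, g s * g t ∈ Submodule.span F (Set.range g) := by
      intro s t
      have hst : g s * g t = α ^ ((s : ℕ) + t) := (pow_add α _ _).symm
      by_cases h' : (s : ℕ) + (t : ℕ) < p
      · rw [hst]
        exact Submodule.subset_span ⟨⟨(s : ℕ) + t, h'⟩, rfl⟩
      · push_neg at h'
        have hr : (s : ℕ) + t - p < p := by omega
        have heq : α ^ ((s : ℕ) + t) = α ^ p * α ^ ((s : ℕ) + t - p) := by
          rw [← pow_add]; congr 1; omega
        have : g s * g t = a • g ⟨(s : ℕ) + t - p, hr⟩ := by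
          rw [hst, heq, hα, Algebra.smul_def]
        rw [this]
        exact Submodule.smul_mem _ _ (Submodule.subset_span ⟨_, rfl⟩)
    intro x
    have hx : x ∈ Algebra.adjoin F {α} := hgen ▸ Algebra.mem_top
    induction hx using Algebra.adjoin_induction with
    | mem y hy =>
      rw [Set.mem_singleton_iff] at hy
      subst hy
      have : y = g ⟨1, hp2⟩ := by simp [hg]
      rw [this]; exact Submodule.subset_span ⟨_, rfl⟩
    | algebraMap r =>
      have : algebraMap F L r = r • g ⟨0, hp1⟩ := by simp [hg, Algebra.smul_def]
      rw [this]
      exact Submodule.smul_mem _ _ (Submodule.subset_span ⟨_, rfl⟩)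
    | add x y hx hy ihx ihy => exact Submodule.add_mem _ ihx ihy
    | mul x y hx hy ihx ihy =>
      have hmm : x * y ∈ Submodule.span F (Set.range g) * Submodule.span F (Set.range g) :=
        Submodule.mul_mem_mul ihx ihy
      rw [Submodule.span_mul_span] at hmm
      refine Submodule.span_le.mpr ?_ hmm
      intro z hz
      rw [Set.mem_mul] at hz
      obtain ⟨z1, ⟨s1, rfl⟩, z2, ⟨t1, rfl⟩, rfl⟩ := hz
      exact helper s1 t1
  -- Step 2 : m linearly independent isotropic vectors over L
  set S : Set (Fin n → L) := {x | ∑ i, algebraMap F L (c i) * x i ^ p = 0} with hS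
  obtain ⟨tS, htsub, htspan, htind⟩ := exists_linearIndependent L S
  have htfin : tS.Finite := htind.setFinite
  haveI := htfin.fintype
  have hm' : m ≤ Fintype.card tS := by
    have hcard := finrank_span_set_eq_card htind
    rw [htspan] at hcard
    have hdef : defectIdx p L (fun i => algebraMap F L (c i))
        = Module.finrank L (Submodule.span L S) := rfl
    rw [hdef, hcard, Set.toFinset_card] at h
    exact h
  obtain ⟨e⟩ : Nonempty (Fin m ↪ tS) :=
    Function.Embedding.nonempty_of_card_le (by simpa using hm')
  set v : Fin m → (Fin n → L) := fun j => (e j : Fin n → L) with hv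
  have hvS : ∀ j, v j ∈ S := fun j => htsub (e j).2
  have hvind : LinearIndependent L v := htind.comp e e.injective
  -- Step 3 : decompose coordinates over F
  have hdec : ∀ j i, ∃ d : Fin p → F, ∑ t, d t • g t = v j i := fun j i =>
    (Submodule.mem_span_range_iff_exists_fun F).mp (hspanL (v j i))
  choose d hd using hdec
  set w : Fin m → Fin p → Fin n → F := fun j t i => d j i t with hw
  -- Step 4 : the subspace W spanned by the w's, and a basis of it
  set W : Submodule F (Fin n → F) :=
    Submodule.span F (Set.range fun q : Fin m × Fin p => w q.1 q.2) with hW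
  haveI : FiniteDimensional F W := FiniteDimensional.span_of_finite F (Set.finite_range _)
  set k : ℕ := Module.finrank F W with hk
  have hkle : k ≤ p * m := by
    have h1 : k ≤ (Set.range fun q : Fin m × Fin p => w q.1 q.2).toFinset.card := by
      rw [hk, hW]; exact finrank_span_le_card _
    have h2 : (Set.range fun q : Fin m × Fin p => w q.1 q.2).toFinset.card
        ≤ Fintype.card (Fin m × Fin p) := by
      rw [Set.toFinset_card]; exact Fintype.card_range_le _
    simp only [Fintype.card_prod, Fintype.card_fin] at h2
    calc k ≤ m * p := le_trans h1 h2
      _ = p * m := Nat.mul_comm _ _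
  set bW : Module.Basis (Fin k) F W := Module.finBasis F W with hbW
  set u : Fin k → (Fin n → F) := fun r => (bW r : Fin n → F) with hu
  have huind : LinearIndependent F u := by
    have := bW.linearIndependent.map' W.subtype (Submodule.ker_subtype W)
    exact this
  have hwmem : ∀ j t, w j t ∈ W :=
    fun j t => Submodule.subset_span ⟨(j, t), rfl⟩
  -- coefficients of w j t in the basis u
  set E : Fin m → Fin p → Fin k → F := fun j t => bW.repr ⟨w j t, hwmem j t⟩ with hE
  have hErep : ∀ j t, ∑ r, E j t r • u r = w j t := by
    intro j t
    have := bW.sum_repr ⟨w j t, hwmem j t⟩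
    calc ∑ r, E j t r • u r = ((∑ r, E j t r • bW r : W) : Fin n → F) := by
          push_cast [Submodule.coe_sum]; rfl
      _ = w j t := by rw [this]
  -- the subform
  set b : Fin k → F := fun r => ∑ i, c i * (u r i) ^ p with hb
  refine ⟨k, b, hkle, ?_, ?_⟩
  · -- the embedding
    refine ⟨Fintype.linearCombination F u, ?_, ?_⟩
    · rw [← LinearMap.ker_eq_bot, LinearMap.ker_eq_bot']
      intro x hx
      simp only [Fintype.linearCombination_apply] at hx
      exact funext (Fintype.linearIndependent_iff.mp huind x hx)
    · intro x
      have hfx : ∀ i, (Fintype.linearCombination F u x) i = ∑ r, x r * u r i := by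
        intro i
        simp [Fintype.linearCombination_apply, Finset.sum_apply]
      calc ∑ i, c i * (Fintype.linearCombination F u x) i ^ p
          = ∑ i, c i * ∑ r, x r ^ p * u r i ^ p := by
            refine Finset.sum_congr rfl fun i _ => ?_
            rw [hfx i, sum_pow_char]
            simp [mul_pow]
        _ = ∑ i, ∑ r, c i * u r i ^ p * x r ^ p := by
            refine Finset.sum_congr rfl fun i _ => ?_
            rw [Finset.mul_sum]
            exact Finset.sum_congr rfl fun r _ => by ring
        _ = ∑ r, ∑ i, c i * u r i ^ p * x r ^ p := Finset.sum_comm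
        _ = ∑ r, b r * x r ^ p := by
            refine Finset.sum_congr rfl fun r _ => ?_
            rw [hb, Finset.sum_mul]
  · -- the defect bound
    set uL : Fin k → (Fin n → L) := fun r i => algebraMap F L (u r i) with huL
    set sL : Fin m → Fin k → L := fun j r => ∑ t, algebraMap F L (E j t r) * g t with hsL
    have hwrep : ∀ j t i, w j t i = ∑ r, E j t r * u r i := by
      intro j t i
      have := congrFun (hErep j t) i
      simpa [Finset.sum_apply] using this.symm
    have hkey : ∀ j i, v j i = ∑ r, sL j r * uL r i := by
      intro j i
      rw [← hd j i]
      calc ∑ t, d j i t • g t = ∑ t, algebraMap F L (w j t i) * g t := by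
            refine Finset.sum_congr rfl fun t _ => ?_
            rw [Algebra.smul_def]
        _ = ∑ t, ∑ r, algebraMap F L (E j t r) * uL r i * g t := by
            refine Finset.sum_congr rfl fun t _ => ?_
            rw [hwrep j t i, map_sum, Finset.sum_mul]
            exact Finset.sum_congr rfl fun r _ => by rw [map_mul]
        _ = ∑ r, ∑ t, algebraMap F L (E j t r) * uL r i * g t := Finset.sum_comm
        _ = ∑ r, sL j r * uL r i := by
            refine Finset.sum_congr rfl fun r _ => ?_
            rw [hsL, Finset.sum_mul]
            exact Finset.sum_congr rfl fun t _ => by ring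
    have hbL : ∀ r, algebraMap F L (b r) = ∑ i, algebraMap F L (c i) * uL r i ^ p := by
      intro r
      rw [hb, map_sum]
      exact Finset.sum_congr rfl fun i _ => by rw [map_mul, map_pow]
    have hsS : ∀ j, ∑ r, algebraMap F L (b r) * (sL j r) ^ p = 0 := by
      intro j
      calc ∑ r, algebraMap F L (b r) * (sL j r) ^ p
          = ∑ r, ∑ i, algebraMap F L (c i) * ((sL j r) * uL r i) ^ p := by
            refine Finset.sum_congr rfl fun r _ => ?_
            rw [hbL, Finset.sum_mul]
            exact Finset.sum_congr rfl fun i _ => by rw [mul_pow]; ring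
        _ = ∑ i, ∑ r, algebraMap F L (c i) * ((sL j r) * uL r i) ^ p := Finset.sum_comm
        _ = ∑ i, algebraMap F L (c i) * (v j i) ^ p := by
            refine Finset.sum_congr rfl fun i _ => ?_
            rw [← Finset.mul_sum, ← sum_pow_char, ← hkey]
        _ = 0 := hvS j
    have hsind : LinearIndependent L sL := by
      rw [Fintype.linearIndependent_iff]
      intro lam hlam
      have hlam' : ∀ r, ∑ j, lam j * sL j r = 0 := by
        intro r
        have := congrFun hlam r
        simpa [Finset.sum_apply] using this
      have hv0 : ∑ j, lam j • v j = 0 := by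
        funext i
        have : ∑ j, lam j * v j i = 0 := by
          calc ∑ j, lam j * v j i = ∑ j, ∑ r, lam j * (sL j r * uL r i) := by
                refine Finset.sum_congr rfl fun j _ => ?_
                rw [hkey j i, Finset.mul_sum]
            _ = ∑ r, (∑ j, lam j * sL j r) * uL r i := by
                rw [Finset.sum_comm]
                refine Finset.sum_congr rfl fun r _ => ?_
                rw [Finset.sum_mul]
                exact Finset.sum_congr rfl fun j _ => by ring
            _ = 0 := by simp [hlam']
        simpa [Finset.sum_apply] using this
      exact Fintype.linearIndependent_iff.mp hvind lam hv0
    have hrange : Set.range sL ⊆ {x : Fin k → L | ∑ j, algebraMap F L (b j) * x j ^ p = 0} := by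
      rintro _ ⟨j, rfl⟩
      exact hsS j
    have hle : Submodule.span L (Set.range sL)
        ≤ Submodule.span L {x : Fin k → L | ∑ j, algebraMap F L (b j) * x j ^ p = 0} :=
      Submodule.span_mono hrange
    have hfr : Module.finrank L (Submodule.span L (Set.range sL)) = m := by
      rw [finrank_span_eq_card hsind, Fintype.card_fin]
    have hdef2 : defectIdx p L (fun j => algebraMap F L (b j))
        = Module.finrank L
          (Submodule.span L {x : Fin k → L | ∑ j, algebraMap F L (b j) * x j ^ p = 0}) := rfl
    rw [hdef2, ← hfr]
    exact Submodule.finrank_mono hle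
end

section
/- Let p = 2, F a field of characteristic 2, φ an anisotropic quasilinear quadratic form over F, a ∈ F \ F², and m a positive integer. Then i₀(φ_{F(√a)}) ≥ m if and only if there exists a quasilinear quadratic form τ of dimension m over F such that ⟨1,a⟩ ⊗ τ is isomorphic to a subform of φ. -/
open scoped BigOperators

lemma fin2_cases (j : Fin 2) : j = 0 ∨ j = 1 := by omega

/-- Let `F` have characteristic `2`, `φ ≅ ⟨c₀,…,c_{n-1}⟩` an anisotropic
quasilinear quadratic form over `F`, `a ∈ F ∖ F²`, `L = F(√a)` and `m ≥ 1`.  Then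
`i₀(φ_L) ≥ m` iff there is a form `τ = ⟨b₀,…,b_{m-1}⟩` of dimension `m` over `F` such
that `⟨1,a⟩ ⊗ τ` (with coefficients `a^j·bᵢ`, `j ∈ {0,1}`) is isomorphic to a subform
of `φ`. -/
theorem stmt11 (F : Type*) [Field F] [CharP F 2]
    (a : F) (ha : a ∉ Set.range fun x : F => x ^ 2)
    (L : Type*) [Field L] [Algebra F L]
    (α : L) (hα : α ^ 2 = algebraMap F L a) (hgen : Algebra.adjoin F {α} = ⊤)
    (n : ℕ) (c : Fin n → F)
    (haniso : ∀ x : Fin n → F, ∑ i, c i * x i ^ 2 = 0 → x = 0)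
    (m : ℕ) (hm : 0 < m) :
    m ≤ defectIdx 2 L (fun i => algebraMap F L (c i)) ↔
      ∃ b : Fin m → F, ∃ f : (Fin 2 × Fin m → F) →ₗ[F] (Fin n → F),
        Function.Injective f ∧
        ∀ v : Fin 2 × Fin m → F,
          ∑ i, c i * (f v) i ^ 2 = ∑ ji : Fin 2 × Fin m, a ^ (ji.1 : ℕ) * b ji.2 * v ji ^ 2 := by
  classical
  have hFL : Function.Injective (algebraMap F L) := (algebraMap F L).injective
  haveI : CharP L 2 := charP_of_injective_algebraMap hFL 2
  have ha0 : a ≠ 0 := fun h => ha ⟨0, by simp [h]⟩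
  set A := algebraMap F L with hA
  -- every element of L decomposes as A y + A z * α
  have hspan : ∀ x : L, ∃ y z : F, x = A y + A z * α := by
    have hone : (1 : L) ∈ Submodule.span F ({1, α} : Set L) :=
      Submodule.subset_span (by simp)
    have hmul : ∀ x y : L, x ∈ Submodule.span F ({1, α} : Set L) →
        y ∈ Submodule.span F ({1, α} : Set L) →
        x * y ∈ Submodule.span F ({1, α} : Set L) := by
      intro x y hx hy
      rw [Submodule.mem_span_pair] at hx hy ⊢
      obtain ⟨p, q, rfl⟩ := hx
      obtain ⟨r, s, rfl⟩ := hy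
      refine ⟨p * r + q * s * a, p * s + q * r, ?_⟩
      simp only [Algebra.smul_def, map_add, map_mul, mul_one]
      linear_combination (-(algebraMap F L q * algebraMap F L s)) * hα
    have hT : ∀ x : L, x ∈ Submodule.span F ({1, α} : Set L) := by
      intro x
      have hle := Algebra.adjoin_le (R := F)
        (S := Submodule.toSubalgebra _ hone hmul)
        (s := {α}) (by
          intro t ht
          rcases ht with rfl
          exact Submodule.subset_span (by simp))
      rw [hgen] at hle
      exact hle Algebra.mem_top
    intro x
    rcases Submodule.mem_span_pair.1 (hT x) with ⟨y, z, hyz⟩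
    exact ⟨y, z, by rw [← hyz]; simp [Algebra.smul_def]; rfl⟩
  -- 1, α are F-linearly independent
  have hind : ∀ y z : F, A y + A z * α = 0 → y = 0 ∧ z = 0 := by
    intro y z h
    by_cases hz : z = 0
    · subst hz
      simp only [map_zero, zero_mul, add_zero] at h
      exact ⟨hFL (by simpa using h), rfl⟩
    · exfalso
      apply ha
      have hzL : A z ≠ 0 := fun h' => hz (hFL (by simpa using h'))
      have h2 : A z * α = A y := by
        have := eq_neg_of_add_eq_zero_right h
        rwa [CharTwo.neg_eq] at this
      have hα' : A (y / z) = α := by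
        rw [map_div₀, ← h2]
        field_simp
      exact ⟨y / z, hFL (by rw [map_pow, hα', hα])⟩
  -- the quadratic form over L computed on decomposed vectors
  have hquad : ∀ y z : Fin n → F,
      (∑ i, A (c i) * (A (y i) + A (z i) * α) ^ 2)
        = A ((∑ i, c i * y i ^ 2) + a * ∑ i, c i * z i ^ 2) := by
    intro y z
    rw [map_add, map_mul, map_sum, map_sum, Finset.mul_sum, ← Finset.sum_add_distrib]
    refine Finset.sum_congr rfl fun i _ => ?_
    rw [CharTwo.add_sq, mul_pow, hα]
    simp only [map_mul, map_pow]
    ring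
  -- the isotropic vectors form a submodule W
  let W : Submodule L (Fin n → L) :=
    { carrier := {x : Fin n → L | ∑ i, A (c i) * x i ^ 2 = 0}
      add_mem' := by
        intro x y hx hy
        simp only [Set.mem_setOf_eq] at hx hy ⊢
        have : ∀ i, A (c i) * (x i + y i) ^ 2 = A (c i) * x i ^ 2 + A (c i) * y i ^ 2 := by
          intro i; rw [CharTwo.add_sq]; ring
        simp only [Pi.add_apply]
        rw [Finset.sum_congr rfl fun i _ => this i, Finset.sum_add_distrib, hx, hy, add_zero]
      zero_mem' := by simp
      smul_mem' := by
        intro t x hx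
        simp only [Set.mem_setOf_eq] at hx ⊢
        have : ∀ i, A (c i) * (t • x) i ^ 2 = t ^ 2 * (A (c i) * x i ^ 2) := by
          intro i; simp only [Pi.smul_apply, smul_eq_mul]; ring
        rw [Finset.sum_congr rfl fun i _ => this i, ← Finset.mul_sum, hx, mul_zero] }
  have hWmem : ∀ x : Fin n → L, x ∈ W ↔ ∑ i, A (c i) * x i ^ 2 = 0 := fun x => Iff.rfl
  have hdef : defectIdx 2 L (fun i => A (c i)) = Module.finrank L W := by
    unfold defectIdx
    exact congrArg (fun p : Submodule L (Fin n → L) => Module.finrank L p) (Submodule.span_eq W)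
  rw [hdef]
  constructor
  · -- forward direction
    intro hle
    haveI : FiniteDimensional L ↥W := inferInstance
    set B := Module.finBasis L ↥W with hB
    set xs : Fin m → (Fin n → L) := fun k => (B (Fin.castLE hle k) : Fin n → L) with hxs
    have hxs_mem : ∀ k, xs k ∈ W := fun k => (B (Fin.castLE hle k)).2
    have hxs_li : LinearIndependent L xs := by
      have h1 : LinearIndependent L (fun k : Fin m => B (Fin.castLE hle k)) :=
        B.linearIndependent.comp _ (Fin.castLE_injective hle)
      exact h1.map' W.subtype W.ker_subtype
    choose y z hyz using fun k i => hspan (xs k i)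
    have hmem : ∀ k, ∑ i, A (c i) * xs k i ^ 2 = 0 := fun k => hxs_mem k
    have hiso : ∀ k, (∑ i, c i * y k i ^ 2) + a * ∑ i, c i * z k i ^ 2 = 0 := by
      intro k
      have h0 := hmem k
      simp only [fun i => hyz k i] at h0
      rw [hquad] at h0
      exact hFL (by rw [map_zero]; exact h0)
    set b : Fin m → F := fun k => ∑ i, c i * z k i ^ 2 with hb
    have hyval : ∀ k, ∑ i, c i * y k i ^ 2 = a * b k := by
      intro k
      linear_combination (hiso k) - CharTwo.add_self_eq_zero (a * b k)
    set g : Fin 2 × Fin m → (Fin n → F) :=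
      fun jk => if jk.1 = 0 then z jk.2 else y jk.2 with hg
    set f : (Fin 2 × Fin m → F) →ₗ[F] (Fin n → F) := Fintype.linearCombination F g with hf
    have hfapply : ∀ v : Fin 2 × Fin m → F, ∀ i,
        f v i = ∑ jk : Fin 2 × Fin m, v jk * g jk i := by
      intro v i
      rw [hf, Fintype.linearCombination_apply]
      simp [Finset.sum_apply]
    -- value of the quadratic form on g-combinations
    have hgval : ∀ jk : Fin 2 × Fin m,
        ∑ i, c i * g jk i ^ 2 = a ^ (jk.1 : ℕ) * b jk.2 := by
      rintro ⟨j, k⟩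
      rcases fin2_cases j with rfl | rfl
      · simp [hg, hb]
      · simp only [hg]
        norm_num
        rw [hyval k]
    have hfval : ∀ v : Fin 2 × Fin m → F,
        ∑ i, c i * (f v) i ^ 2 = ∑ jk : Fin 2 × Fin m, a ^ (jk.1 : ℕ) * b jk.2 * v jk ^ 2 := by
      intro v
      calc ∑ i, c i * (f v) i ^ 2
          = ∑ i, ∑ jk : Fin 2 × Fin m, v jk ^ 2 * (c i * g jk i ^ 2) := by
            refine Finset.sum_congr rfl fun i _ => ?_
            rw [hfapply v i, CharTwo.sum_sq, Finset.mul_sum]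
            exact Finset.sum_congr rfl fun jk _ => by rw [mul_pow]; ring
        _ = ∑ jk : Fin 2 × Fin m, v jk ^ 2 * ∑ i, c i * g jk i ^ 2 := by
            rw [Finset.sum_comm]
            exact Finset.sum_congr rfl fun jk _ => by rw [Finset.mul_sum]
        _ = ∑ jk : Fin 2 × Fin m, a ^ (jk.1 : ℕ) * b jk.2 * v jk ^ 2 := by
            exact Finset.sum_congr rfl fun jk _ => by rw [hgval jk]; ring
    -- linear independence of the family g
    have hgli : LinearIndependent F g := by
      rw [Fintype.linearIndependent_iff]
      intro s hsum
      -- evaluate the relation pointwise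
      have hrel : ∀ i, ∑ k, (s (0, k) * z k i + s (1, k) * y k i) = 0 := by
        intro i
        have h0 := congrFun hsum i
        simp only [Finset.sum_apply, Pi.smul_apply, smul_eq_mul, Pi.zero_apply] at h0
        rw [Fintype.sum_prod_type, Fin.sum_univ_two] at h0
        rw [Finset.sum_add_distrib]
        simpa [hg] using h0
      set lam : Fin m → L := fun k => A (s (0, k)) + A (s (1, k)) * α with hlam
      set w : Fin n → F := fun i => ∑ k, (s (0, k) * y k i + a * s (1, k) * z k i) with hw
      have hclaim : (∑ k, lam k • xs k) = fun i => A (w i) := by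
        funext i
        simp only [Finset.sum_apply, Pi.smul_apply, smul_eq_mul]
        calc ∑ k, lam k * xs k i
            = ∑ k, (A (s (0, k) * y k i + a * s (1, k) * z k i)
                + A (s (0, k) * z k i + s (1, k) * y k i) * α) := by
              refine Finset.sum_congr rfl fun k _ => ?_
              rw [hyz k i, hlam]
              simp only [map_add, map_mul]
              linear_combination (A (s (1, k)) * A (z k i)) * hα
          _ = A (∑ k, (s (0, k) * y k i + a * s (1, k) * z k i))
                + A (∑ k, (s (0, k) * z k i + s (1, k) * y k i)) * α := by
              rw [Finset.sum_add_distrib, map_sum, map_sum, ← Finset.sum_mul]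
          _ = A (w i) := by rw [hrel i, map_zero, zero_mul, add_zero, hw]
      have hWsum : (fun i => A (w i)) ∈ W := by
        rw [← hclaim]
        exact Submodule.sum_mem W fun k _ => W.smul_mem _ (hxs_mem k)
      have hw0 : w = 0 := by
        apply haniso
        apply hFL
        rw [map_zero, map_sum]
        rw [hWmem] at hWsum
        rw [← hWsum]
        exact Finset.sum_congr rfl fun i _ => by rw [map_mul, map_pow]
      have hsum0 : (∑ k, lam k • xs k) = 0 := by
        rw [hclaim, hw0]
        funext i
        simp
      have hlam0 := Fintype.linearIndependent_iff.1 hxs_li lam hsum0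
      rintro ⟨j, k⟩
      have := hind _ _ (hlam0 k)
      rcases fin2_cases j with rfl | rfl
      · exact this.1
      · exact this.2
    have hfinj : Function.Injective f := by
      intro v v' hvv'
      have h0 : f (v - v') = 0 := by rw [map_sub, hvv', sub_self]
      have h1 := Fintype.linearIndependent_iff.1 hgli (v - v')
        (by
          have h2 : f (v - v') = ∑ i : Fin 2 × Fin m, (v - v') i • g i := by
            rw [hf, Fintype.linearCombination_apply]
          rw [← h2]; exact h0)
      funext jk
      have := h1 jk
      simpa [sub_eq_zero] using this
    exact ⟨b, f, hfinj, hfval⟩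
  · -- reverse direction
    rintro ⟨b, f, hfinj, hident⟩
    set e : Fin 2 × Fin m → (Fin 2 × Fin m → F) := fun jk₀ => Pi.single jk₀ 1 with he
    set u : Fin m → Fin n → F := fun k => f (e (0, k)) with hu
    set w : Fin m → Fin n → F := fun k => f (e (1, k)) with hwdef
    set e : Fin 2 × Fin m → (Fin 2 × Fin m → F) := fun jk₀ => Pi.single jk₀ 1 with he
    have hsingle : ∀ jk₀ : Fin 2 × Fin m,
        ∑ jk : Fin 2 × Fin m, a ^ (jk.1 : ℕ) * b jk.2 * e jk₀ jk ^ 2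
          = a ^ (jk₀.1 : ℕ) * b jk₀.2 := by
      intro jk₀
      rw [Finset.sum_eq_single jk₀]
      · simp [he]
      · intro jk _ hne
        have : e jk₀ jk = 0 := Pi.single_eq_of_ne hne 1
        rw [this]
        ring
      · intro h; exact absurd (Finset.mem_univ _) h
    have huval : ∀ k, ∑ i, c i * u k i ^ 2 = b k := by
      intro k
      rw [hu]
      rw [hident (e (0, k)), hsingle (0, k)]
      simp
    have hwval : ∀ k, ∑ i, c i * w k i ^ 2 = a * b k := by
      intro k
      rw [hwdef]
      rw [hident (e (1, k)), hsingle (1, k)]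
      norm_num
    set xs : Fin m → (Fin n → L) := fun k => fun i => A (w k i) + A (u k i) * α with hxs
    have hxsW : ∀ k, xs k ∈ W := by
      intro k
      rw [hWmem]
      rw [hxs]
      rw [hquad (w k) (u k), hwval k, huval k, CharTwo.add_self_eq_zero, map_zero]
    -- independence of the (u, w) family over F
    have hfli : ∀ s : Fin 2 × Fin m → F,
        (∑ k, (s (0, k) • u k + s (1, k) • w k)) = 0 → ∀ jk, s jk = 0 := by
      intro s hs jk
      have hrw : (∑ jk : Fin 2 × Fin m, s jk • e jk) = s := by
        funext jk'
        simp [he, Finset.sum_apply, Pi.single_apply]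
      have hfs : f s = 0 := by
        calc f s = ∑ jk : Fin 2 × Fin m, s jk • f (e jk) := by
              conv_lhs => rw [← hrw]
              rw [map_sum]
              simp only [map_smul]
          _ = (∑ k, s (0, k) • f (e (0, k))) + (∑ k, s (1, k) • f (e (1, k))) := by
              rw [Fintype.sum_prod_type, Fin.sum_univ_two]
          _ = 0 := by
              rw [← Finset.sum_add_distrib]
              exact hs
      have h2 : s = 0 := hfinj (by rw [hfs, map_zero])
      exact congrFun h2 jk
    have hxsli : LinearIndependent L xs := by
      rw [Fintype.linearIndependent_iff]
      intro lam hlam k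
      choose p q hpq using fun k => hspan (lam k)
      have hcomp : ∀ i,
          A (∑ k, (p k * w k i + a * q k * u k i))
            + A (∑ k, (q k * w k i + p k * u k i)) * α = 0 := by
        intro i
        have h0 := congrFun hlam i
        simp only [Finset.sum_apply, Pi.smul_apply, smul_eq_mul, Pi.zero_apply] at h0
        rw [← h0, map_sum, map_sum, Finset.sum_mul, ← Finset.sum_add_distrib]
        refine Finset.sum_congr rfl fun k _ => ?_
        rw [hpq k, hxs]
        simp only [map_add, map_mul]
        linear_combination (-(A (q k) * A (u k i))) * hα
      have hzero : ∀ i, (∑ k, (q k * w k i + p k * u k i)) = 0 :=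
        fun i => (hind _ _ (hcomp i)).2
      set s : Fin 2 × Fin m → F := fun jk => if jk.1 = 0 then p jk.2 else q jk.2 with hs
      have hs0 : ∀ jk, s jk = 0 := by
        apply hfli
        funext i
        simp only [Finset.sum_apply, Pi.add_apply, Pi.smul_apply, smul_eq_mul, Pi.zero_apply]
        rw [← hzero i]
        refine Finset.sum_congr rfl fun k _ => ?_
        simp [hs]
        ring
      have hp0 : p k = 0 := hs0 (0, k)
      have hq0 : q k = 0 := hs0 (1, k)
      rw [hpq k, hp0, hq0, map_zero, zero_mul, add_zero]
    have hspanle : Submodule.span L (Set.range xs) ≤ W :=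
      Submodule.span_le.2 (by rintro x ⟨k, rfl⟩; exact hxsW k)
    calc m = Fintype.card (Fin m) := (Fintype.card_fin m).symm
      _ = Module.finrank L (Submodule.span L (Set.range xs)) :=
          (finrank_span_eq_card hxsli).symm
      _ ≤ Module.finrank L ↥W := Submodule.finrank_mono hspanle
end

section
/- Let φ be an anisotropic quasilinear p-form over a field F of characteristic p, a ∈ F \ F^p, and m a positive integer. If (p² − p − 1)·i₀(φ_{F(a^{1/p})}) − (p² − 2p)·dim φ ≥ m, then there exists a quasilinear p-form τ of dimension m over F such that ⟪a⟫ ⊗ τ is isomorphic to a subform of φ. -/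
open scoped BigOperators

open Module Submodule Set

section RN

variable {p : ℕ} [Fact p.Prime] {F : Type*} [Field F] [CharP F p]

/-- The subfield of `p`-th powers. -/
noncomputable def kk (p : ℕ) (F : Type*) [Field F] [Fact p.Prime] [CharP F p] :
    Subfield F :=
  (frobenius F p).fieldRange

theorem mem_kk {p : ℕ} {F : Type*} [Field F] [Fact p.Prime] [CharP F p] (x : F) :
    x ^ p ∈ kk p F :=
  RingHom.mem_fieldRange.mpr ⟨x, frobenius_def p x⟩

theorem kk_exists_root {p : ℕ} {F : Type*} [Field F] [Fact p.Prime] [CharP F p] {y : F}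
    (hy : y ∈ kk p F) : ∃ x : F, x ^ p = y := by
  obtain ⟨x, hx⟩ := RingHom.mem_fieldRange.mp hy
  exact ⟨x, by rwa [frobenius_def] at hx⟩

theorem kk_smul_def {p : ℕ} {F : Type*} [Field F] [Fact p.Prime] [CharP F p]
    (t : kk p F) (z : F) : t • z = (t : F) * z := rfl

/-- Kernel of the quasilinear form with coefficients `g`, as an `F`-submodule. -/
def kerForm (p : ℕ) {F : Type*} [Field F] [CharP F p] [Fact p.Prime]
    {ι : Type*} [Fintype ι] (g : ι → F) : Submodule F (ι → F) where
  carrier := {x | ∑ i, g i * x i ^ p = 0}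
  add_mem' := by
    intro x y hx hy
    have : ∀ i, g i * (x i + y i) ^ p = g i * x i ^ p + g i * y i ^ p := by
      intro i
      rw [add_pow_char, mul_add]
    simp only [Set.mem_setOf_eq, Pi.add_apply] at *
    rw [Finset.sum_congr rfl fun i _ => this i, Finset.sum_add_distrib, hx, hy, add_zero]
  zero_mem' := by
    have hp : p ≠ 0 := (Fact.out : p.Prime).ne_zero
    simp [zero_pow hp]
  smul_mem' := by
    intro t x hx
    simp only [Set.mem_setOf_eq, Pi.smul_apply, smul_eq_mul] at *
    have : ∀ i, g i * (t * x i) ^ p = t ^ p * (g i * x i ^ p) := by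
      intro i; rw [mul_pow]; ring
    rw [Finset.sum_congr rfl fun i _ => this i, ← Finset.mul_sum, hx, mul_zero]

theorem mem_kerForm_iff {p : ℕ} [Fact p.Prime] {F : Type*} [Field F] [CharP F p]
    {ι : Type*} [Fintype ι] (g : ι → F) (x : ι → F) :
    x ∈ kerForm p g ↔ ∑ i, g i * x i ^ p = 0 := Iff.rfl

/-- Semilinear rank-nullity: the kernel of the form plus the `F^p`-rank of the
coefficient span is the number of variables. -/
theorem rank_nullity_form {ι : Type*} [Fintype ι] (g : ι → F) :
    finrank F (kerForm p g) + finrank (kk p F) (span (kk p F) (Set.range g))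
      = Fintype.card ι := by
  classical
  set k := kk p F
  obtain ⟨t, hts, hspan, hind⟩ := exists_linearIndependent k (Set.range g)
  have htfin : t.Finite := (Set.finite_range g).subset hts
  haveI : Fintype t := htfin.fintype
  -- every g i is a k-combination of elements of t
  have hmem : ∀ i, g i ∈ span k (Set.range ((↑) : t → F)) := by
    intro i
    rw [Subtype.range_coe, hspan]
    exact subset_span (mem_range_self i)
  have hrep : ∀ i, ∃ f : t → k, ∑ w, f w • (w : F) = g i := by
    intro i
    exact (mem_span_range_iff_exists_fun k).mp (hmem i)
  choose f hf using hrep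
  have hroot : ∀ i (w : t), ∃ γ : F, γ ^ p = (f i w : F) := fun i w =>
    kk_exists_root (f i w).2
  choose γ hγ using hroot
  -- the linear map whose kernel is kerForm g
  let H : (ι → F) →ₗ[F] (t → F) :=
    { toFun := fun x w => ∑ i, γ i w * x i
      map_add' := by
        intro x y; funext w
        simp [mul_add, Finset.sum_add_distrib]
      map_smul' := by
        intro s x; funext w
        simp only [Pi.smul_apply, smul_eq_mul, RingHom.id_apply]
        rw [Finset.mul_sum]
        exact Finset.sum_congr rfl fun i _ => by ring }
  have hHval : ∀ x : ι → F, ∑ i, g i * x i ^ p = ∑ w : t, (w : F) * (H x w) ^ p := by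
    intro x
    have h1 : ∀ i, g i * x i ^ p = ∑ w : t, (w : F) * (γ i w ^ p * x i ^ p) := by
      intro i
      rw [← hf i, Finset.sum_mul]
      refine Finset.sum_congr rfl fun w _ => ?_
      rw [kk_smul_def, ← hγ i w]
      ring
    rw [Finset.sum_congr rfl fun i _ => h1 i, Finset.sum_comm]
    refine Finset.sum_congr rfl fun w _ => ?_
    have : (H x w) ^ p = ∑ i, γ i w ^ p * x i ^ p := by
      show (∑ i, γ i w * x i) ^ p = _
      rw [sum_pow_char]
      exact Finset.sum_congr rfl fun i _ => by rw [mul_pow]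
    rw [this, Finset.mul_sum]
  have hker : kerForm p g = LinearMap.ker H := by
    ext x
    rw [mem_kerForm_iff, LinearMap.mem_ker]
    constructor
    · intro hx
      have h2 : ∑ w : t, ((⟨(H x w) ^ p, mem_kk _⟩ : k)) • (w : F) = 0 := by
        rw [← hx, hHval]
        exact Finset.sum_congr rfl fun w _ => by rw [kk_smul_def]; ring
      have h3 := Fintype.linearIndependent_iff.mp hind _ h2
      funext w
      have h4 : (H x w) ^ p = 0 := congrArg Subtype.val (h3 w)
      exact pow_eq_zero_iff (Fact.out : p.Prime).ne_zero |>.mp h4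
    · intro hx
      rw [hHval x, hx]
      simp [zero_pow (Fact.out : p.Prime).ne_zero]
  -- surjectivity of H
  have hsig : ∀ w : t, ∃ i, g i = (w : F) := fun w => hts w.2
  choose σ hσ using hsig
  have hcoefδ : ∀ w' w : t, γ (σ w') w = if w = w' then 1 else 0 := by
    intro w' w
    have h5 : ∑ u : t, (f (σ w') u - if u = w' then 1 else 0 : k) • (u : F) = 0 := by
      rw [Finset.sum_congr rfl fun u _ => sub_smul (f (σ w') u) _ (u : F),
        Finset.sum_sub_distrib, hf (σ w'), hσ w']
      have : ∑ u : t, (if u = w' then (1 : k) else 0) • (u : F) = (w' : F) := by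
        rw [Finset.sum_eq_single w']
        · simp
        · intro u _ hu; simp [hu]
        · simp
      rw [this, sub_self]
    have h6 := Fintype.linearIndependent_iff.mp hind _ h5 w
    have h7 : (f (σ w') w : F) = if w = w' then 1 else 0 := by
      have := sub_eq_zero.mp h6
      rw [this]
      by_cases hw : w = w' <;> simp [hw]
    have h8 : γ (σ w') w ^ p = if w = w' then 1 else 0 := by rw [hγ, h7]
    by_cases hw : w = w'
    · subst hw
      rw [if_pos rfl] at h8 ⊢
      have h9 : (γ (σ w) w - 1) ^ p = 0 := by
        rw [sub_pow_char, h8, one_pow, sub_self]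
      have h10 := pow_eq_zero_iff (Fact.out : p.Prime).ne_zero |>.mp h9
      exact sub_eq_zero.mp h10
    · simp only [hw, if_false] at h8 ⊢
      exact pow_eq_zero_iff (Fact.out : p.Prime).ne_zero |>.mp h8
  have hsurj : LinearMap.range H = ⊤ := by
    rw [← top_le_iff, ← (Pi.basisFun F t).span_eq, span_le]
    rintro _ ⟨w', rfl⟩
    refine ⟨(Pi.single (σ w') (1:F) : ι → F), ?_⟩
    funext w
    have hH : H (Pi.single (σ w') (1:F) : ι → F) w
        = ∑ i, γ i w * (Pi.single (σ w') (1:F) : ι → F) i := rfl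
    rw [hH]
    rw [Finset.sum_eq_single (σ w')]
    · rw [Pi.single_eq_same, mul_one, hcoefδ]
      simp [Pi.basisFun_apply, Pi.single_apply, eq_comm]
    · intro i _ hi
      rw [Pi.single_eq_of_ne hi, mul_zero]
    · simp
  have hrn := LinearMap.finrank_range_add_finrank_ker H
  rw [hsurj, finrank_top] at hrn
  rw [hker]
  have hcardt : finrank k (span k (Set.range g)) = Fintype.card t := by
    rw [← hspan]
    have := finrank_span_set_eq_card (s := t) hind
    rw [this, Set.toFinset_card]
  rw [hcardt]
  have : finrank F (t → F) = Fintype.card t := by simp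
  rw [this] at hrn
  have : finrank F (ι → F) = Fintype.card ι := by simp
  omega

end RN

section Defect

open Polynomial

variable {p : ℕ} [Fact p.Prime] {F : Type*} [Field F] [CharP F p]
  {L : Type*} [Field L] [Algebra F L]


theorem defect_key (a : F) (ha : ∀ b : F, b ^ p ≠ a)
    (α : L) (hα : α ^ p = algebraMap F L a) (hgen : Algebra.adjoin F {α} = ⊤)
    (n : ℕ) (c : Fin n → F) :
    Module.finrank F (kerForm p (fun ji : Fin p × Fin n => a ^ (ji.1 : ℕ) * c ji.2))
      = p * defectIdx p L (fun i => algebraMap F L (c i)) := by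
  classical
  haveI : CharP L p := charP_of_injective_algebraMap (algebraMap F L).injective p
  have hp : p.Prime := Fact.out
  -- basis of L over F
  have hmonic : (X ^ p - C a : F[X]).Monic := monic_X_pow_sub_C a hp.ne_zero
  have hint : IsIntegral F α := ⟨X ^ p - C a, hmonic, by simp [hα]⟩
  have hirr : Irreducible (X ^ p - C a : F[X]) := X_pow_sub_C_irreducible_of_prime hp ha
  have hmin : minpoly F α = X ^ p - C a :=
    (minpoly.eq_of_irreducible_of_monic hirr (by simp [hα]) hmonic).symm
  let pb : PowerBasis F L :=
    (Algebra.adjoin.powerBasis hint).map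
      ((Subalgebra.equivOfEq _ _ hgen).trans Subalgebra.topEquiv)
  have hgen' : pb.gen = α := by
    simp [pb, Algebra.adjoin.powerBasis_gen]
  have hdim : pb.dim = p := by
    simp [pb, Algebra.adjoin.powerBasis_dim, hmin]
  haveI : FiniteDimensional F L := pb.finite
  have hfr : Module.finrank F L = p := by rw [pb.finrank, hdim]
  let bL : Basis (Fin p) F L := pb.basis.reindex (finCongr hdim)
  have hbL : ∀ j : Fin p, bL j = α ^ (j : ℕ) := by
    intro j
    rw [show bL j = pb.basis ((finCongr hdim).symm j) from pb.basis.reindex_apply _ _,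
      pb.basis_eq_pow, hgen']
    rfl
  -- the isotropic submodule over L
  set cL : Fin n → L := fun i => algebraMap F L (c i) with hcL
  have hdef : defectIdx p L cL = Module.finrank L (kerForm p cL) := by
    have hspanset : Submodule.span L {x : Fin n → L | ∑ i, cL i * x i ^ p = 0}
        = kerForm p cL := by
      rw [show {x : Fin n → L | ∑ i, cL i * x i ^ p = 0}
          = ((kerForm p cL : Submodule L (Fin n → L)) : Set (Fin n → L)) from rfl]
      exact Submodule.span_eq _
    unfold defectIdx
    rw [hspanset]
  -- linear equivalence between coordinates and L^n
  let A1 : (Fin p × Fin n → F) →ₗ[F] (Fin n → Fin p → F) :=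
    { toFun := fun y i j => y (j, i)
      map_add' := fun _ _ => rfl
      map_smul' := fun _ _ => rfl }
  let A2 : (Fin n → Fin p → F) →ₗ[F] (Fin p × Fin n → F) :=
    { toFun := fun z ji => z ji.2 ji.1
      map_add' := fun _ _ => rfl
      map_smul' := fun _ _ => rfl }
  let e1 : (Fin p × Fin n → F) ≃ₗ[F] (Fin n → Fin p → F) :=
    LinearEquiv.ofLinear A1 A2 (LinearMap.ext fun _ => rfl) (LinearMap.ext fun _ => rfl)
  let e2 : (Fin n → Fin p → F) ≃ₗ[F] (Fin n → L) :=
    LinearEquiv.piCongrRight (fun _ : Fin n => bL.equivFun.symm)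
  let Φ : (Fin p × Fin n → F) ≃ₗ[F] (Fin n → L) := e1.trans e2
  have hΦ : ∀ (y : Fin p × Fin n → F) (i : Fin n), Φ y i = ∑ j, y (j, i) • bL j := by
    intro y i
    show bL.equivFun.symm (fun j => y (j, i)) = _
    rw [Basis.equivFun_symm_apply]
  have hval : ∀ y : Fin p × Fin n → F,
      ∑ i, cL i * (Φ y i) ^ p
        = algebraMap F L (∑ ji : Fin p × Fin n, (a ^ (ji.1 : ℕ) * c ji.2) * y ji ^ p) := by
    intro y
    have hterm : ∀ i, (Φ y i) ^ p = ∑ j : Fin p, algebraMap F L (y (j, i) ^ p * a ^ (j : ℕ)) := by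
      intro i
      rw [hΦ, sum_pow_char]
      refine Finset.sum_congr rfl fun j _ => ?_
      rw [Algebra.smul_def, mul_pow, hbL, ← pow_mul, mul_comm (j : ℕ) p, pow_mul, hα,
        ← map_pow, ← map_pow, ← map_mul]
    calc ∑ i, cL i * (Φ y i) ^ p
        = ∑ i, algebraMap F L (∑ j, c i * (y (j, i) ^ p * a ^ (j : ℕ))) := by
          refine Finset.sum_congr rfl fun i _ => ?_
          rw [hterm, map_sum, Finset.mul_sum]
          exact Finset.sum_congr rfl fun j _ => by rw [← map_mul]
      _ = algebraMap F L (∑ i, ∑ j, c i * (y (j, i) ^ p * a ^ (j : ℕ))) := by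
          rw [map_sum]
      _ = _ := by
          congr 1
          rw [Finset.sum_comm, Fintype.sum_prod_type]
          exact Finset.sum_congr rfl fun j _ => Finset.sum_congr rfl fun i _ => by ring
  have hmap : Submodule.map (Φ : (Fin p × Fin n → F) →ₗ[F] (Fin n → L))
      (kerForm p (fun ji : Fin p × Fin n => a ^ (ji.1 : ℕ) * c ji.2))
        = (kerForm p cL).restrictScalars F := by
    ext z
    simp only [Submodule.mem_map, Submodule.restrictScalars_mem]
    constructor
    · rintro ⟨y, hy, rfl⟩
      show ∑ i, cL i * ((Φ : (Fin p × Fin n → F) →ₗ[F] (Fin n → L)) y i) ^ p = 0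
      have hy' := (mem_kerForm_iff _ y).mp hy
      show ∑ i, cL i * (Φ y i) ^ p = 0
      rw [hval, hy', map_zero]
    · intro hz
      obtain ⟨y, rfl⟩ := Φ.surjective z
      refine ⟨y, ?_, rfl⟩
      rw [mem_kerForm_iff]
      have hz' : ∑ i, cL i * (Φ y i) ^ p = 0 := hz
      rw [hval] at hz'
      exact (map_eq_zero_iff _ (algebraMap F L).injective).mp hz'
  haveI : FiniteDimensional L (kerForm p cL) := inferInstance
  have h1 : Module.finrank F (kerForm p (fun ji : Fin p × Fin n => a ^ (ji.1 : ℕ) * c ji.2))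
      = Module.finrank F ((kerForm p cL).restrictScalars F) := by
    rw [← hmap]
    exact (LinearEquiv.finrank_map_eq Φ _).symm
  have h2 : Module.finrank F ((kerForm p cL).restrictScalars F)
      = Module.finrank F L * Module.finrank L (kerForm p cL) := by
    have e3 := (Submodule.restrictScalarsEquiv (R := L) (S := F) (M := Fin n → L)
      (kerForm p cL)).restrictScalars F
    rw [LinearEquiv.finrank_eq e3]
    exact (Module.finrank_mul_finrank F L (kerForm p cL)).symm
  rw [h1, h2, hdef, hfr]

end Defect

section Comb

open Finset

variable {p : ℕ} [Fact p.Prime] {F : Type*} [Field F] [CharP F p]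

theorem pow_li {L : Type*} [Field L] [Algebra F L] (a : F)
    (α : L) (hα : α ^ p = algebraMap F L a) (hgen : Algebra.adjoin F {α} = ⊤)
    (ha : ∀ b : F, b ^ p ≠ a) :
    LinearIndependent (kk p F) (fun j : Fin p => a ^ (j : ℕ)) := by
  classical
  haveI : CharP L p := charP_of_injective_algebraMap (algebraMap F L).injective p
  have hp : p.Prime := Fact.out
  have hmonic : (Polynomial.X ^ p - Polynomial.C a : Polynomial F).Monic :=
    Polynomial.monic_X_pow_sub_C a hp.ne_zero
  have hint : IsIntegral F α := ⟨Polynomial.X ^ p - Polynomial.C a, hmonic, by simp [hα]⟩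
  have hirr : Irreducible (Polynomial.X ^ p - Polynomial.C a : Polynomial F) :=
    X_pow_sub_C_irreducible_of_prime hp ha
  have hmin : minpoly F α = Polynomial.X ^ p - Polynomial.C a :=
    (minpoly.eq_of_irreducible_of_monic hirr (by simp [hα]) hmonic).symm
  let pb : PowerBasis F L :=
    (Algebra.adjoin.powerBasis hint).map
      ((Subalgebra.equivOfEq _ _ hgen).trans Subalgebra.topEquiv)
  have hgen' : pb.gen = α := by simp [pb, Algebra.adjoin.powerBasis_gen]
  have hdim : pb.dim = p := by simp [pb, Algebra.adjoin.powerBasis_dim, hmin]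
  let bL : Basis (Fin p) F L := pb.basis.reindex (finCongr hdim)
  have hbL : ∀ j : Fin p, bL j = α ^ (j : ℕ) := by
    intro j
    rw [show bL j = pb.basis ((finCongr hdim).symm j) from pb.basis.reindex_apply _ _,
      pb.basis_eq_pow, hgen']
    rfl
  rw [Fintype.linearIndependent_iff]
  intro u hu
  obtain ⟨x, hx⟩ := Classical.axiomOfChoice (fun j : Fin p => kk_exists_root (u j).2)
  have hL : (∑ j : Fin p, algebraMap F L (x j) * α ^ (j : ℕ)) ^ p = 0 := by
    rw [sum_pow_char]
    have : ∀ j : Fin p, (algebraMap F L (x j) * α ^ (j : ℕ)) ^ p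
        = algebraMap F L ((u j : F) * a ^ (j : ℕ)) := by
      intro j
      rw [mul_pow, ← map_pow, hx, ← pow_mul, mul_comm (j : ℕ) p, pow_mul, hα, ← map_pow,
        ← map_mul]
    rw [Finset.sum_congr rfl fun j _ => this j, ← map_sum]
    have : (∑ j : Fin p, (u j : F) * a ^ (j : ℕ)) = 0 := by
      rw [← hu]
      exact Finset.sum_congr rfl fun j _ => (kk_smul_def _ _).symm
    rw [this, map_zero]
  have hL0 : ∑ j : Fin p, x j • bL j = 0 := by
    have h0 := pow_eq_zero_iff hp.ne_zero |>.mp hL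
    rw [← h0]
    exact Finset.sum_congr rfl fun j _ => by rw [hbL, Algebra.smul_def]
  have hx0 := Fintype.linearIndependent_iff.mp bL.linearIndependent _ hL0
  intro j
  have : (u j : F) = 0 := by rw [← hx j, hx0 j, zero_pow hp.ne_zero]
  exact Subtype.ext this

end Comb

section Comb2

open Submodule Set Module

variable {p : ℕ} [Fact p.Prime] {F : Type*} [Field F] [CharP F p]

theorem stable_pow (a : F) (U : Submodule (kk p F) F) (hU : ∀ w ∈ U, a * w ∈ U) :
    ∀ (i : ℕ), ∀ w ∈ U, a ^ i * w ∈ U := by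
  intro i
  induction i with
  | zero => intro w hw; rwa [pow_zero, one_mul]
  | succ i ih =>
    intro w hw
    have : a ^ (i + 1) * w = a * (a ^ i * w) := by ring
    rw [this]
    exact hU _ (ih w hw)

/-- span of `1, a, …, a^{p-1}` over `F^p`. -/
noncomputable def AP (p : ℕ) {F : Type*} [Field F] [Fact p.Prime] [CharP F p] (a : F) :
    Submodule (kk p F) F :=
  span (kk p F) (Set.range fun j : Fin p => a ^ (j : ℕ))

theorem one_mem_AP (a : F) : (1 : F) ∈ AP p a := by
  have h0 : (0 : ℕ) < p := (Fact.out : p.Prime).pos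
  have : (1 : F) = a ^ ((⟨0, h0⟩ : Fin p) : ℕ) := by simp
  rw [this]
  exact subset_span (mem_range_self _)

theorem AP_stable (a : F) : ∀ w ∈ AP p a, a * w ∈ AP p a := by
  intro w hw
  induction hw using Submodule.span_induction with
  | mem z hz =>
    obtain ⟨j, rfl⟩ := hz
    by_cases hj : (j : ℕ) + 1 < p
    · have : a * a ^ (j : ℕ) = a ^ (((⟨(j : ℕ) + 1, hj⟩ : Fin p)) : ℕ) := by
        rw [← pow_succ']
      rw [this]
      exact subset_span (mem_range_self _)
    · have hj' : (j : ℕ) + 1 = p := by omega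
      have : a * a ^ (j : ℕ) = (⟨a ^ p, mem_kk a⟩ : kk p F) • (1 : F) := by
        rw [kk_smul_def, mul_one, ← pow_succ', hj']
      rw [this]
      exact Submodule.smul_mem _ _ (one_mem_AP a)
  | zero => rw [mul_zero]; exact zero_mem _
  | add z₁ z₂ _ _ h1 h2 => rw [mul_add]; exact add_mem h1 h2
  | smul t z _ h1 =>
    rw [kk_smul_def, mul_left_comm, ← kk_smul_def]
    exact Submodule.smul_mem _ _ h1

theorem smul_of_AP (a : F) (U : Submodule (kk p F) F) (hU : ∀ w ∈ U, a * w ∈ U) :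
    ∀ z ∈ AP p a, ∀ w ∈ U, z * w ∈ U := by
  intro z hz
  induction hz using Submodule.span_induction with
  | mem z' hz' =>
    obtain ⟨j, rfl⟩ := hz'
    exact fun w hw => stable_pow a U hU _ w hw
  | zero => intro w hw; rw [zero_mul]; exact zero_mem _
  | add z₁ z₂ _ _ h1 h2 => intro w hw; rw [add_mul]; exact add_mem (h1 w hw) (h2 w hw)
  | smul t z' _ h1 =>
    intro w hw
    rw [kk_smul_def, mul_assoc, ← kk_smul_def]
    exact Submodule.smul_mem _ _ (h1 w hw)

theorem AP_inv (a : F) (x : F) (hx : x ∈ AP p a) (hx0 : x ≠ 0) : x⁻¹ ∈ AP p a := by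
  haveI : FiniteDimensional (kk p F) (AP p a) :=
    FiniteDimensional.span_of_finite _ (Set.finite_range _)
  let mulx : AP p a →ₗ[kk p F] AP p a :=
    LinearMap.restrict (LinearMap.mulLeft (kk p F) x)
      (fun z hz => smul_of_AP a (AP p a) (AP_stable a) x hx z hz)
  have hinj : Function.Injective mulx := by
    intro z w hzw
    have : x * (z : F) = x * (w : F) := congrArg Subtype.val hzw
    exact Subtype.ext (mul_left_cancel₀ hx0 this)
  have hsurj := LinearMap.surjective_of_injective hinj
  obtain ⟨y, hy⟩ := hsurj ⟨1, one_mem_AP a⟩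
  have hxy : x * (y : F) = 1 := congrArg Subtype.val hy
  rw [inv_eq_of_mul_eq_one_right hxy]
  exact y.2

end Comb2

section Extract

open Submodule Set Module

variable {p : ℕ} [Fact p.Prime] {F : Type*} [Field F] [CharP F p]

theorem extract (a : F) (hli : LinearIndependent (kk p F) (fun j : Fin p => a ^ (j : ℕ)))
    (W : Submodule (kk p F) F) (hWa : ∀ w ∈ W, a * w ∈ W) [FiniteDimensional (kk p F) W] :
    ∀ m : ℕ, p * m ≤ finrank (kk p F) W →
      ∃ b : Fin m → F, (∀ i, b i ∈ W) ∧
        ∀ u : Fin p × Fin m → kk p F,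
          (∑ ji : Fin p × Fin m, (u ji : F) * (a ^ (ji.1 : ℕ) * b ji.2)) = 0 → ∀ ji, u ji = 0 := by
  intro m
  induction m with
  | zero =>
    intro _
    exact ⟨fun i => 0, fun i => i.elim0, fun u _ ji => ji.2.elim0⟩
  | succ m ih =>
    intro hrank
    have hp : p.Prime := Fact.out
    obtain ⟨b, hbW, hbind⟩ := ih (le_trans (Nat.mul_le_mul_left p (Nat.le_succ m)) hrank)
    set G : Fin p × Fin m → F := fun ji => a ^ (ji.1 : ℕ) * b ji.2 with hG
    set U : Submodule (kk p F) F := span (kk p F) (Set.range G) with hU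
    haveI : FiniteDimensional (kk p F) U :=
      FiniteDimensional.span_of_finite _ (Set.finite_range _)
    have hUrank : finrank (kk p F) U ≤ p * m := by
      have h1 := finrank_range_le_card (R := kk p F) G
      simpa [Set.finrank, Fintype.card_prod] using h1
    obtain ⟨w, hwW, hwU⟩ : ∃ w ∈ W, w ∉ U := by
      by_contra hcon
      push_neg at hcon
      have hle : W ≤ U := hcon
      have h6 := Submodule.finrank_mono hle
      have hmul : p * (m + 1) = p * m + p := by ring
      have hpos := hp.pos
      omega
    have hUst : ∀ z ∈ U, a * z ∈ U := by
      intro z hz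
      induction hz using Submodule.span_induction with
      | mem z' hz' =>
        obtain ⟨ji, rfl⟩ := hz'
        by_cases hj : (ji.1 : ℕ) + 1 < p
        · have : a * G ji = G (⟨(ji.1 : ℕ) + 1, hj⟩, ji.2) := by
            rw [hG]; simp only []
            rw [← mul_assoc, ← pow_succ']
          rw [this]
          exact subset_span (mem_range_self _)
        · have hj' : (ji.1 : ℕ) + 1 = p := by have := ji.1.2; omega
          have h0 : (0 : ℕ) < p := hp.pos
          have : a * G ji = (⟨a ^ p, mem_kk a⟩ : kk p F) • G (⟨0, h0⟩, ji.2) := by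
            rw [hG, kk_smul_def]; simp only []
            rw [pow_zero, one_mul, ← mul_assoc, ← pow_succ', hj']
          rw [this]
          exact Submodule.smul_mem _ _ (subset_span (mem_range_self _))
      | zero => rw [mul_zero]; exact zero_mem _
      | add z₁ z₂ _ _ h1 h2 => rw [mul_add]; exact add_mem h1 h2
      | smul t z' _ h1 =>
        rw [kk_smul_def, mul_left_comm, ← kk_smul_def]
        exact Submodule.smul_mem _ _ h1
    refine ⟨Fin.snoc b w, ?_, ?_⟩
    · intro i
      refine Fin.lastCases ?_ ?_ i
      · rw [Fin.snoc_last]; exact hwW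
      · intro i'; rw [Fin.snoc_castSucc]; exact hbW i'
    · intro u hu
      have hsplit : (∑ ji : Fin p × Fin (m + 1), (u ji : F) * (a ^ (ji.1 : ℕ) * (Fin.snoc b w : Fin (m+1) → F) ji.2))
          = (∑ j : Fin p, (u (j, Fin.last m) : F) * (a ^ (j : ℕ) * w))
            + ∑ ji : Fin p × Fin m, (u (ji.1, ji.2.castSucc) : F) * (a ^ (ji.1 : ℕ) * b ji.2) := by
        rw [Fintype.sum_prod_type]
        have hrow : ∀ j : Fin p,
            (∑ i : Fin (m + 1), (u (j, i) : F) * (a ^ (j : ℕ) * (Fin.snoc b w : Fin (m+1) → F) i))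
              = (∑ i : Fin m, (u (j, i.castSucc) : F) * (a ^ (j : ℕ) * b i))
                + (u (j, Fin.last m) : F) * (a ^ (j : ℕ) * w) := by
          intro j
          rw [Fin.sum_univ_castSucc]
          congr 1
          · exact Finset.sum_congr rfl fun i _ => by rw [Fin.snoc_castSucc]
          · rw [Fin.snoc_last]
        rw [Finset.sum_congr rfl fun j _ => hrow j, Finset.sum_add_distrib]
        rw [add_comm, Fintype.sum_prod_type]
      set x : F := ∑ j : Fin p, (u (j, Fin.last m) : F) * a ^ (j : ℕ) with hx
      have hxw : (∑ j : Fin p, (u (j, Fin.last m) : F) * (a ^ (j : ℕ) * w)) = x * w := by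
        rw [hx, Finset.sum_mul]
        exact Finset.sum_congr rfl fun j _ => by ring
      have hrest_mem : (∑ ji : Fin p × Fin m, (u (ji.1, ji.2.castSucc) : F)
          * (a ^ (ji.1 : ℕ) * b ji.2)) ∈ U := by
        refine sum_mem fun ji _ => ?_
        rw [← kk_smul_def]
        exact Submodule.smul_mem _ _ (subset_span (mem_range_self ji))
      have hxwU : x * w ∈ U := by
        have h2 : x * w = -(∑ ji : Fin p × Fin m, (u (ji.1, ji.2.castSucc) : F)
            * (a ^ (ji.1 : ℕ) * b ji.2)) := by
          rw [← hxw]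
          rw [hsplit] at hu
          exact eq_neg_of_add_eq_zero_left hu
        rw [h2]
        exact neg_mem hrest_mem
      have hx0 : x = 0 := by
        by_contra hx0
        have hxAP : x ∈ AP p a := by
          refine sum_mem fun j _ => ?_
          rw [← kk_smul_def]
          exact Submodule.smul_mem _ _ (subset_span (mem_range_self j))
        have hinv := AP_inv a x hxAP hx0
        have hwU' : w ∈ U := by
          have h3 := smul_of_AP a U hUst x⁻¹ hinv (x * w) hxwU
          rwa [inv_mul_cancel_left₀ hx0] at h3
        exact hwU hwU'
      have hlast : ∀ j : Fin p, u (j, Fin.last m) = 0 := by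
        have h4 : ∑ j : Fin p, u (j, Fin.last m) • a ^ (j : ℕ) = 0 := by
          rw [← hx0, hx]
          exact Finset.sum_congr rfl fun j _ => kk_smul_def _ _
        exact fun j => Fintype.linearIndependent_iff.mp hli _ h4 j
      have hrest : (∑ ji : Fin p × Fin m, (u (ji.1, ji.2.castSucc) : F)
          * (a ^ (ji.1 : ℕ) * b ji.2)) = 0 := by
        rw [hsplit] at hu
        have h5 : (∑ j : Fin p, (u (j, Fin.last m) : F) * (a ^ (j : ℕ) * w)) = 0 := by
          refine Finset.sum_eq_zero fun j _ => ?_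
          rw [hlast j]
          simp
        rw [h5, zero_add] at hu
        exact hu
      have hres := hbind _ hrest
      rintro ⟨j, i⟩
      refine Fin.lastCases ?_ ?_ i
      · exact hlast j
      · intro i'; exact hres (j, i')

end Extract

section InfBound

open Submodule Module

variable {K V : Type*} [Field K] [AddCommGroup V] [Module K V]

theorem finrank_finset_inf_bound {ι : Type*} [DecidableEq ι]
    (M : Submodule K V) [FiniteDimensional K M] (Us : ι → Submodule K V) :
    ∀ s : Finset ι, (∀ i ∈ s, Us i ≤ M) →
      (finrank K M : ℤ) - ∑ i ∈ s, ((finrank K M : ℤ) - finrank K (Us i))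
        ≤ finrank K ↥(s.inf Us ⊓ M) := by
  intro s
  induction s using Finset.induction_on with
  | empty =>
    intro _
    rw [Finset.inf_empty, top_inf_eq, Finset.sum_empty, sub_zero]
  | insert i s hi ih =>
    intro hle
    have hUi : Us i ≤ M := hle i (Finset.mem_insert_self i s)
    have hIH := ih fun j hj => hle j (Finset.mem_insert_of_mem hj)
    haveI : FiniteDimensional K (Us i) := Submodule.finiteDimensional_of_le hUi
    haveI : FiniteDimensional K ↥(s.inf Us ⊓ M) :=
      Submodule.finiteDimensional_of_le inf_le_right
    have heq : (insert i s).inf Us ⊓ M = Us i ⊓ (s.inf Us ⊓ M) := by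
      rw [Finset.inf_insert, inf_assoc]
    have hsum := Submodule.finrank_sup_add_finrank_inf_eq (Us i) (s.inf Us ⊓ M)
    have hsup : finrank K ↥(Us i ⊔ (s.inf Us ⊓ M)) ≤ finrank K M :=
      Submodule.finrank_mono (sup_le hUi inf_le_right)
    rw [Finset.sum_insert hi, heq]
    push_cast at *
    linarith
end InfBound

section Final

open Submodule Set Module

set_option maxHeartbeats 1600000 in
theorem stmt12_main {p : ℕ} [Fact p.Prime] (F : Type*) [Field F] [CharP F p]
    (a : F) (ha : a ∉ Set.range fun x : F => x ^ p)
    (L : Type*) [Field L] [Algebra F L]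
    (α : L) (hα : α ^ p = algebraMap F L a) (hgen : Algebra.adjoin F {α} = ⊤)
    (n : ℕ) (c : Fin n → F)
    (haniso : ∀ x : Fin n → F, ∑ i, c i * x i ^ p = 0 → x = 0)
    (m : ℕ) (hm : 0 < m)
    (h : (m : ℤ) ≤ ((p : ℤ) ^ 2 - p - 1) *
          (defectIdx p L fun i => algebraMap F L (c i)) - ((p : ℤ) ^ 2 - 2 * p) * n) :
    ∃ b : Fin m → F, ∃ f : (Fin p × Fin m → F) →ₗ[F] (Fin n → F),
      Function.Injective f ∧
      ∀ v : Fin p × Fin m → F,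
        ∑ i, c i * (f v) i ^ p = ∑ ji : Fin p × Fin m, a ^ (ji.1 : ℕ) * b ji.2 * v ji ^ p := by
  classical
  have hp : p.Prime := Fact.out
  have ha' : ∀ b : F, b ^ p ≠ a := fun b hb => ha ⟨b, hb⟩
  have ha0 : a ≠ 0 := fun h0 => ha' 0 (by rw [h0, zero_pow hp.ne_zero])
  set k := kk p F with hk
  -- independence of the coefficients
  have hc_li : LinearIndependent k c := by
    rw [Fintype.linearIndependent_iff]
    intro u hu
    obtain ⟨x, hx⟩ := Classical.axiomOfChoice (fun i : Fin n => kk_exists_root (u i).2)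
    have h0 : ∑ i, c i * x i ^ p = 0 := by
      rw [← hu]
      exact Finset.sum_congr rfl fun i _ => by rw [kk_smul_def, ← hx i]; ring
    have := haniso x h0
    intro i
    refine Subtype.ext ?_
    rw [← hx i, show x i = 0 from congrFun this i, zero_pow hp.ne_zero]
    simp
  set g2 : Fin p × Fin n → F := fun ji => a ^ (ji.1 : ℕ) * c ji.2 with hg2
  set V : Submodule k F := span k (Set.range c) with hVdef
  set E : Submodule k F := span k (Set.range g2) with hEdef
  haveI : FiniteDimensional k E := FiniteDimensional.span_of_finite _ (Set.finite_range _)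
  haveI : FiniteDimensional k V := FiniteDimensional.span_of_finite _ (Set.finite_range _)
  set d : ℕ := defectIdx p L (fun i => algebraMap F L (c i)) with hd
  -- the defect computation
  have hE : finrank k E + p * d = p * n := by
    have h1 := rank_nullity_form (p := p) g2
    rw [defect_key a ha' α hα hgen n c] at h1
    simp only [Fintype.card_prod, Fintype.card_fin] at h1
    rw [hEdef, hd, hk]
    omega
  have hV : finrank k V = n := by
    rw [hVdef, finrank_span_eq_card hc_li, Fintype.card_fin]
  have hVE : V ≤ E := by
    rw [hVdef, hEdef]
    refine span_le.mpr fun z hz => ?_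
    obtain ⟨t, rfl⟩ := hz
    refine subset_span ⟨(⟨0, hp.pos⟩, t), ?_⟩
    rw [hg2]; simp
  have hiE : ∀ (i : ℕ), i < p → ∀ z ∈ V, a ^ i * z ∈ E := by
    intro i hilt z hz
    induction hz using Submodule.span_induction with
    | mem z' hz' =>
      obtain ⟨t, rfl⟩ := hz'
      exact subset_span ⟨(⟨i, hilt⟩, t), rfl⟩
    | zero => rw [mul_zero]; exact zero_mem _
    | add z₁ z₂ _ _ h1 h2 => rw [mul_add]; exact add_mem h1 h2
    | smul t z' _ h1 =>
      rw [kk_smul_def, mul_left_comm, ← kk_smul_def]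
      exact Submodule.smul_mem _ _ h1
  -- multiplication equivalences
  have hmulE : ∀ u : F, u ≠ 0 → ∃ e : F ≃ₗ[k] F, (∀ z, (e : F →ₗ[k] F) z = u * z) := by
    intro u hu
    refine ⟨LinearEquiv.ofLinear (LinearMap.mulLeft k u) (LinearMap.mulLeft k u⁻¹)
      (LinearMap.ext fun z => ?_) (LinearMap.ext fun z => ?_), fun z => rfl⟩
    · show u * (u⁻¹ * z) = z
      rw [mul_inv_cancel_left₀ hu]
    · show u⁻¹ * (u * z) = z
      rw [inv_mul_cancel_left₀ hu]
  obtain ⟨eM, heM⟩ := hmulE (a ^ (p - 1)) (pow_ne_zero _ ha0)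
  set M : Submodule k F := Submodule.comap (eM : F →ₗ[k] F) E with hMdef
  have hMmap : M = Submodule.map (eM.symm : F →ₗ[k] F) E := Submodule.comap_equiv_eq_map_symm eM E
  haveI : FiniteDimensional k M := by
    rw [hMmap]
    exact Module.Finite.map _ _
  have hMrank : finrank k M = finrank k E := by
    rw [hMmap]
    exact LinearEquiv.finrank_map_eq eM.symm E
  have hmemM : ∀ z : F, z ∈ M ↔ a ^ (p - 1) * z ∈ E := by
    intro z
    rw [hMdef, Submodule.mem_comap]
    constructor <;> intro hzz <;> [rwa [← heM z]; rwa [heM z]]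
  -- the subspaces a^{-j} V
  have hUs : ∀ j : Fin p, ∃ Uj : Submodule k F, (∀ z : F, z ∈ Uj ↔ a ^ (j : ℕ) * z ∈ V)
      ∧ finrank k Uj = n := by
    intro j
    obtain ⟨e, he⟩ := hmulE (a ^ (j : ℕ)) (pow_ne_zero _ ha0)
    refine ⟨Submodule.comap (e : F →ₗ[k] F) V, fun z => ?_, ?_⟩
    · rw [Submodule.mem_comap]
      constructor <;> intro hzz <;> [rwa [← he z]; rwa [he z]]
    · rw [Submodule.comap_equiv_eq_map_symm e V, LinearEquiv.finrank_map_eq e.symm V, hV]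
  choose Uf hUf hUr using hUs
  have hUleM : ∀ j : Fin p, Uf j ≤ M := by
    intro j z hz
    rw [hUf j] at hz
    rw [hmemM]
    have hsplitpow : a ^ (p - 1) = a ^ (p - 1 - (j : ℕ)) * a ^ (j : ℕ) := by
      rw [← pow_add]
      congr 1
      have := j.2
      omega
    rw [hsplitpow, mul_assoc]
    exact hiE _ (by have := j.2; omega) _ hz
  -- the intersection
  set W : Submodule k F := Finset.univ.inf Uf ⊓ M with hWdef
  haveI : FiniteDimensional k W := Submodule.finiteDimensional_of_le inf_le_right
  have hmemW : ∀ z : F, z ∈ W ↔ (∀ j : Fin p, a ^ (j : ℕ) * z ∈ V) ∧ a ^ (p - 1) * z ∈ E := by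
    intro z
    rw [hWdef, Submodule.mem_inf, Submodule.mem_finsetInf, ← hmemM]
    constructor
    · rintro ⟨h1, h2⟩
      exact ⟨fun j => (hUf j z).mp (h1 j (Finset.mem_univ j)), h2⟩
    · rintro ⟨h1, h2⟩
      exact ⟨fun j _ => (hUf j z).mpr (h1 j), h2⟩
  have hWV : W ≤ V := by
    intro z hz
    have h1 := ((hmemW z).mp hz).1 ⟨0, hp.pos⟩
    simpa using h1
  have hWa : ∀ w ∈ W, a * w ∈ W := by
    intro w hw
    obtain ⟨h1, _⟩ := (hmemW w).mp hw
    have hwV : w ∈ V := by have := h1 ⟨0, hp.pos⟩; simpa using this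
    rw [hmemW]
    constructor
    · intro j
      by_cases hj : (j : ℕ) + 1 < p
      · have : a ^ (j : ℕ) * (a * w) = a ^ (((⟨(j : ℕ) + 1, hj⟩ : Fin p)) : ℕ) * w := by
          simp only []
          ring
        rw [this]
        exact h1 _
      · have hj' : (j : ℕ) + 1 = p := by have := j.2; omega
        have : a ^ (j : ℕ) * (a * w) = (⟨a ^ p, mem_kk a⟩ : k) • w := by
          rw [kk_smul_def, ← mul_assoc, ← pow_succ, hj']
        rw [this]
        exact Submodule.smul_mem _ _ hwV
    · have : a ^ (p - 1) * (a * w) = (⟨a ^ p, mem_kk a⟩ : k) • w := by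
        rw [kk_smul_def, ← mul_assoc, ← pow_succ, show p - 1 + 1 = p from by have := hp.pos; omega]
      rw [this]
      exact Submodule.smul_mem _ _ (hVE hwV)
  -- dimension bound for W
  have hWbound : (finrank k M : ℤ) - p * ((finrank k M : ℤ) - n) ≤ finrank k W := by
    have h1 := finrank_finset_inf_bound M Uf Finset.univ (fun j _ => hUleM j)
    rw [Finset.sum_congr rfl (fun j _ => by rw [hUr j])] at h1
    rw [Finset.sum_const, Finset.card_univ, Fintype.card_fin, nsmul_eq_mul] at h1
    exact_mod_cast h1
  have hnD : (n : ℤ) ≤ finrank k M := by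
    have : V ≤ M := by
      intro z hz
      rw [hmemM]
      exact hiE _ (by have := hp.pos; omega) _ hz
    have := Submodule.finrank_mono this
    rw [hV] at this
    exact_mod_cast this
  -- the numeric inequality
  have hfinal : p * m ≤ finrank k W := by
    set D : ℤ := (finrank k M : ℤ) with hD
    have hE' : D + (p : ℤ) * d = (p : ℤ) * n := by
      rw [hD, hMrank]
      exact_mod_cast hE
    have hp2 : (2 : ℤ) ≤ p := by exact_mod_cast hp.two_le
    have hscaled := mul_le_mul_of_nonneg_left h (show (0 : ℤ) ≤ p by positivity)
    have e5 : (p : ℤ) * (((p : ℤ) ^ 2 - p - 1) * d - ((p : ℤ) ^ 2 - 2 * p) * n)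
        = ((p : ℤ) ^ 2 - p - 1) * ((p : ℤ) * d) - ((p : ℤ) ^ 2 - 2 * p) * p * n := by ring
    have e6 : ((p : ℤ) ^ 2 - p - 1) * ((p : ℤ) * d)
        = ((p : ℤ) ^ 2 - p - 1) * ((p : ℤ) * n - D) := by
      rw [show (p : ℤ) * d = (p : ℤ) * n - D by linarith]
    have e7 : (0 : ℤ) ≤ ((p : ℤ) - 2) * (D - n) * p :=
      mul_nonneg (mul_nonneg (by linarith) (by linarith)) (by positivity)
    have target : (p : ℤ) * m ≤ (p : ℤ) * n - ((p : ℤ) - 1) * D := by nlinarith [hscaled, e5, e6, e7]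
    have : (p : ℤ) * m ≤ (finrank k W : ℤ) := by
      have h8 : D - (p : ℤ) * (D - n) ≤ finrank k W := hWbound
      nlinarith [h8, target]
    exact_mod_cast this
  -- extraction
  obtain ⟨b, hbW, hbind⟩ := extract a (pow_li a α hα hgen ha') W hWa m hfinal
  have hmemV : ∀ ji : Fin p × Fin m, a ^ (ji.1 : ℕ) * b ji.2 ∈ V := fun ji =>
    hWV (stable_pow a W hWa (ji.1 : ℕ) _ (hbW ji.2))
  -- representation by coefficients
  have hrep : ∀ ji : Fin p × Fin m, ∃ lam : Fin n → F,
      (∑ t, lam t ^ p * c t) = a ^ (ji.1 : ℕ) * b ji.2 := by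
    intro ji
    have h1 := hmemV ji
    rw [hVdef, mem_span_range_iff_exists_fun] at h1
    obtain ⟨u, hu⟩ := h1
    obtain ⟨x, hx⟩ := Classical.axiomOfChoice (fun t : Fin n => kk_exists_root (u t).2)
    refine ⟨x, ?_⟩
    rw [← hu]
    exact Finset.sum_congr rfl fun t _ => by rw [kk_smul_def, ← hx t]
  choose lam hlam using hrep
  -- the linear embedding
  let f : (Fin p × Fin m → F) →ₗ[F] (Fin n → F) :=
    { toFun := fun v t => ∑ ji : Fin p × Fin m, lam ji t * v ji
      map_add' := by
        intro v w; funext t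
        simp only [Pi.add_apply]
        rw [← Finset.sum_add_distrib]
        exact Finset.sum_congr rfl fun ji _ => by ring
      map_smul' := by
        intro s v; funext t
        simp only [Pi.smul_apply, smul_eq_mul, RingHom.id_apply]
        rw [Finset.mul_sum]
        exact Finset.sum_congr rfl fun ji _ => by ring }
  have hval : ∀ v : Fin p × Fin m → F,
      ∑ i, c i * (f v) i ^ p = ∑ ji : Fin p × Fin m, a ^ (ji.1 : ℕ) * b ji.2 * v ji ^ p := by
    intro v
    show ∑ i, c i * (∑ ji : Fin p × Fin m, lam ji i * v ji) ^ p = _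
    have hterm : ∀ i, (∑ ji : Fin p × Fin m, lam ji i * v ji) ^ p
        = ∑ ji : Fin p × Fin m, lam ji i ^ p * v ji ^ p := by
      intro i
      rw [sum_pow_char]
      exact Finset.sum_congr rfl fun ji _ => mul_pow _ _ _
    calc ∑ i, c i * (∑ ji : Fin p × Fin m, lam ji i * v ji) ^ p
        = ∑ i, ∑ ji : Fin p × Fin m, v ji ^ p * (lam ji i ^ p * c i) := by
          refine Finset.sum_congr rfl fun i _ => ?_
          rw [hterm, Finset.mul_sum]
          exact Finset.sum_congr rfl fun ji _ => by ring
      _ = ∑ ji : Fin p × Fin m, v ji ^ p * ∑ i, lam ji i ^ p * c i := by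
          rw [Finset.sum_comm]
          exact Finset.sum_congr rfl fun ji _ => by rw [Finset.mul_sum]
      _ = ∑ ji : Fin p × Fin m, a ^ (ji.1 : ℕ) * b ji.2 * v ji ^ p := by
          exact Finset.sum_congr rfl fun ji _ => by rw [hlam ji]; ring
  have h0 : ∀ v : Fin p × Fin m → F, f v = 0 → v = 0 := by
    intro v hv
    have h1 := hval v
    rw [hv] at h1
    have h2 : ∑ i, c i * (0 : Fin n → F) i ^ p = 0 := by
      simp [zero_pow hp.ne_zero]
    rw [h2] at h1
    have h3 := hbind (fun ji => ⟨v ji ^ p, mem_kk _⟩) ?_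
    · funext ji
      have h4 : v ji ^ p = 0 := congrArg Subtype.val (h3 ji)
      exact pow_eq_zero_iff hp.ne_zero |>.mp h4
    · calc ∑ ji : Fin p × Fin m, ((⟨v ji ^ p, mem_kk _⟩ : k) : F) * (a ^ (ji.1 : ℕ) * b ji.2)
          = ∑ ji : Fin p × Fin m, a ^ (ji.1 : ℕ) * b ji.2 * v ji ^ p :=
            Finset.sum_congr rfl fun ji _ => by ring
        _ = 0 := h1.symm
  exact ⟨b, f, LinearMap.ker_eq_bot.mp (LinearMap.ker_eq_bot'.mpr h0), hval⟩

end Final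

/-- Let `φ ≅ ⟨c₀,…,c_{n-1}⟩` be an anisotropic quasilinear `p`-form over
`F` (char `p`), `a ∈ F ∖ F^p` with `L = F(a^{1/p})`, and `m ≥ 1`.  If
`(p² − p − 1)·i₀(φ_L) − (p² − 2p)·dim φ ≥ m` (in `ℤ`), then there is a form
`τ = ⟨b₀,…,b_{m-1}⟩` of dimension `m` over `F` such that `⟪a⟫ ⊗ τ` (with coefficients
`a^j·bᵢ`, `0 ≤ j < p`) is isomorphic to a subform of `φ`. -/
theorem stmt12 {p : ℕ} [Fact p.Prime] (F : Type*) [Field F] [CharP F p]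
    (a : F) (ha : a ∉ Set.range fun x : F => x ^ p)
    (L : Type*) [Field L] [Algebra F L]
    (α : L) (hα : α ^ p = algebraMap F L a) (hgen : Algebra.adjoin F {α} = ⊤)
    (n : ℕ) (c : Fin n → F)
    (haniso : ∀ x : Fin n → F, ∑ i, c i * x i ^ p = 0 → x = 0)
    (m : ℕ) (hm : 0 < m)
    (h : (m : ℤ) ≤ ((p : ℤ) ^ 2 - p - 1) *
          (defectIdx p L fun i => algebraMap F L (c i)) - ((p : ℤ) ^ 2 - 2 * p) * n) :
    ∃ b : Fin m → F, ∃ f : (Fin p × Fin m → F) →ₗ[F] (Fin n → F),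
      Function.Injective f ∧
      ∀ v : Fin p × Fin m → F,
        ∑ i, c i * (f v) i ^ p = ∑ ji : Fin p × Fin m, a ^ (ji.1 : ℕ) * b ji.2 * v ji ^ p := by
  exact stmt12_main F a ha L α hα hgen n c haniso m hm h
end

section
/- Let φ and ψ be quasilinear p-forms over a field F of characteristic p, and suppose K and L are field extensions of F such that there exists an F-place K ⇀ L (a local F-algebra homomorphism R → L from a valuation subring R of K containing F). Then i₀(φ_L) ≥ i₀(φ_K). -/
open scoped BigOperators

section Aux

variable {ι : Type*} [Fintype ι]

/-- The zero set of a diagonal quasilinear `p`-form is a submodule in char `p`. -/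
def zsub (p : ℕ) [Fact p.Prime] (E : Type*) [Field E] [CharP E p] (b : ι → E) :
    Submodule E (ι → E) where
  carrier := {x | ∑ i, b i * x i ^ p = 0}
  zero_mem' := by
    simp [zero_pow (Fact.out : p.Prime).ne_zero]
  add_mem' := by
    intro x y hx hy
    simp only [Set.mem_setOf_eq, Pi.add_apply] at *
    have : ∀ i, b i * (x i + y i) ^ p = b i * x i ^ p + b i * y i ^ p := by
      intro i; rw [add_pow_char, mul_add]
    rw [Finset.sum_congr rfl fun i _ => this i, Finset.sum_add_distrib, hx, hy, add_zero]
  smul_mem' := by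
    intro a x hx
    simp only [Set.mem_setOf_eq, Pi.smul_apply, smul_eq_mul] at *
    have : ∀ i, b i * (a * x i) ^ p = a ^ p * (b i * x i ^ p) := by
      intro i; rw [mul_pow]; ring
    rw [Finset.sum_congr rfl fun i _ => this i, ← Finset.mul_sum, hx, mul_zero]

lemma defectIdx_eq (p : ℕ) [Fact p.Prime] (E : Type*) [Field E] [CharP E p] (b : ι → E) :
    defectIdx p E b = Module.finrank E (zsub p E b) := by
  unfold defectIdx
  rw [show {x : ι → E | ∑ i, b i * x i ^ p = 0} = (zsub p E b : Set (ι → E)) from rfl,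
    Submodule.span_eq]

/-- The submodule of vectors supported on `S`. -/
def suppSub (E : Type*) [Field E] (S : Set ι) : Submodule E (ι → E) where
  carrier := {x | ∀ i ∉ S, x i = 0}
  zero_mem' := fun _ _ => rfl
  add_mem' := by
    intro x y hx hy i hi
    simp [hx i hi, hy i hi]
  smul_mem' := by
    intro a x hx i hi
    simp [hx i hi]

lemma mem_suppSub {E : Type*} [Field E] {S : Set ι} {x : ι → E} :
    x ∈ suppSub E S ↔ ∀ i ∉ S, x i = 0 := Iff.rfl

/-- `suppSub E S` is isomorphic to `S → E`. -/
noncomputable def suppEquiv [DecidableEq ι] (E : Type*) [Field E] (S : Finset ι) :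
    suppSub E (S : Set ι) ≃ₗ[E] (S → E) where
  toFun x i := x.1 i
  map_add' x y := rfl
  map_smul' a x := rfl
  invFun y := ⟨fun i => if h : i ∈ S then y ⟨i, h⟩ else 0, by
    intro i hi
    exact dif_neg (by simpa using hi)⟩
  left_inv := by
    intro x
    apply Subtype.ext
    funext i
    by_cases h : i ∈ S
    · exact dif_pos h
    · exact (dif_neg h).trans (x.2 i (by simpa using h)).symm
  right_inv := by
    intro y
    funext i
    exact dif_pos i.2

lemma finrank_suppSub [DecidableEq ι] (E : Type*) [Field E] (S : Finset ι) :
    Module.finrank E (suppSub E (S : Set ι)) = S.card := by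
  rw [(suppEquiv E S).finrank_eq, Module.finrank_fintype_fun_eq_card, Fintype.card_coe]

lemma rank_add_card_le {E : Type*} [Field E] (Z : Submodule E (ι → E)) (S : Finset ι)
    (h : Z ⊓ suppSub E (S : Set ι) = ⊥) :
    Module.finrank E Z + S.card ≤ Fintype.card ι := by
  classical
  have hfin := Submodule.finrank_sup_add_finrank_inf_eq Z (suppSub E (S : Set ι))
  rw [h, finrank_bot, add_zero, finrank_suppSub] at hfin
  rw [← hfin]
  have := Submodule.finrank_le (Z ⊔ suppSub E (S : Set ι))
  rwa [Module.finrank_fintype_fun_eq_card] at this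

lemma single_mem_suppSub [DecidableEq ι] {E : Type*} [Field E] {S : Set ι} {i : ι}
    (hi : i ∈ S) : Pi.single i (1 : E) ∈ suppSub E S := by
  intro j hj
  have : j ≠ i := fun h => hj (h ▸ hi)
  exact Pi.single_eq_of_ne this 1

lemma exists_compl {E : Type*} [Field E] (Z : Submodule E (ι → E)) :
    ∃ S : Finset ι, Z ⊓ suppSub E (S : Set ι) = ⊥ ∧
      Module.finrank E Z + S.card = Fintype.card ι := by
  classical
  set 𝒮 : Finset (Finset ι) :=
    Finset.univ.filter (fun S : Finset ι => Z ⊓ suppSub E (S : Set ι) = ⊥) with h𝒮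
  have hbot : (∅ : Finset ι) ∈ 𝒮 := by
    rw [h𝒮, Finset.mem_filter]
    refine ⟨Finset.mem_univ _, ?_⟩
    rw [eq_bot_iff]
    rintro x ⟨-, hx2⟩
    have : x = 0 := funext fun i => hx2 i (by simp)
    simpa [this] using Submodule.zero_mem ⊥
  obtain ⟨S, hS, hmax⟩ := Finset.exists_max_image 𝒮 Finset.card ⟨∅, hbot⟩
  rw [h𝒮, Finset.mem_filter] at hS
  refine ⟨S, hS.2, ?_⟩
  -- it suffices to show `Z ⊔ suppSub E S = ⊤`
  have htop : Z ⊔ suppSub E (S : Set ι) = ⊤ := by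
    by_contra hne
    -- some standard basis vector is not in the sup
    have : ∃ i : ι, Pi.single i (1 : E) ∉ Z ⊔ suppSub E (S : Set ι) := by
      by_contra hall
      push_neg at hall
      apply hne
      rw [eq_top_iff, ← (Pi.basisFun E ι).span_eq]
      rw [Submodule.span_le]
      rintro x ⟨i, rfl⟩
      simpa [Pi.basisFun_apply] using hall i
    obtain ⟨i, hi⟩ := this
    have hiS : i ∉ S := fun h => hi (Submodule.mem_sup_right (single_mem_suppSub h))
    -- `insert i S` also works, contradicting maximality
    have hins : Z ⊓ suppSub E ((insert i S : Finset ι) : Set ι) = ⊥ := by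
      rw [eq_bot_iff]
      rintro x ⟨hx1, hx2⟩
      have hx2' : ∀ j ∉ (insert i S : Finset ι), x j = 0 := by
        intro j hj; exact hx2 j (by simpa using hj)
      have hxi : x i = 0 := by
        by_contra hxi0
        apply hi
        have hx' : x - x i • (Pi.single i (1 : E) : ι → E) ∈ suppSub E (S : Set ι) := by
          intro j hj
          by_cases hji : j = i
          · subst hji; simp
          · have hj' : j ∉ (insert i S : Finset ι) := by
              simp only [Finset.mem_insert, not_or]
              exact ⟨hji, by simpa using hj⟩
            have : x j = 0 := hx2' j hj'
            simp [this, Pi.single_eq_of_ne (Ne.symm (fun h => hji h.symm)), hji]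
        have hmem : x i • (Pi.single i (1 : E) : ι → E) ∈ Z ⊔ suppSub E (S : Set ι) := by
          have heq : x i • (Pi.single i (1 : E) : ι → E)
              = x - (x - x i • (Pi.single i (1 : E) : ι → E)) := (sub_sub_cancel _ _).symm
          rw [heq]
          exact Submodule.sub_mem _ (Submodule.mem_sup_left hx1) (Submodule.mem_sup_right hx')
        have := Submodule.smul_mem (Z ⊔ suppSub E (S : Set ι)) (x i)⁻¹ hmem
        rwa [smul_smul, inv_mul_cancel₀ hxi0, one_smul] at this
      have hxS : x ∈ suppSub E (S : Set ι) := by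
        intro j hj
        by_cases hji : j = i
        · subst hji; exact hxi
        · refine hx2' j ?_
          simp only [Finset.mem_insert, not_or]
          exact ⟨hji, by simpa using hj⟩
      have : x ∈ Z ⊓ suppSub E (S : Set ι) := ⟨hx1, hxS⟩
      rwa [hS.2, Submodule.mem_bot] at this
    have hmem𝒮 : insert i S ∈ 𝒮 := by
      rw [h𝒮, Finset.mem_filter]
      exact ⟨Finset.mem_univ _, hins⟩
    have := hmax _ hmem𝒮
    rw [Finset.card_insert_of_notMem hiS] at this
    omega
  have hfin := Submodule.finrank_sup_add_finrank_inf_eq Z (suppSub E (S : Set ι))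
  rw [hS.2, finrank_bot, add_zero, finrank_suppSub, htop, finrank_top,
    Module.finrank_fintype_fun_eq_card] at hfin
  exact hfin.symm

end Aux

/-- Let `φ` be a quasilinear `p`-form over `F` (char `p`, given in
diagonal form `⟨c₀,…,c_{n-1}⟩`), and `K`, `L` field extensions of `F` such that there
is an `F`-place `K ⇀ L`, i.e. a valuation subring `R` of `K` containing `F` and a
local `F`-algebra homomorphism `g : R → L`.  Then `i₀(φ_L) ≥ i₀(φ_K)`. -/
theorem stmt13 {p : ℕ} [Fact p.Prime] (F : Type*) [Field F] [CharP F p]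
    (K L : Type*) [Field K] [Field L] [Algebra F K] [Algebra F L]
    (R : ValuationSubring K) (hR : ∀ x : F, algebraMap F K x ∈ R)
    (g : R →+* L) [IsLocalHom g]
    (hg : ∀ x : F, g ⟨algebraMap F K x, hR x⟩ = algebraMap F L x)
    (n : ℕ) (c : Fin n → F) :
    defectIdx p K (fun i => algebraMap F K (c i)) ≤
      defectIdx p L (fun i => algebraMap F L (c i)) := by
  haveI : CharP K p := charP_of_injective_algebraMap (algebraMap F K).injective p
  haveI : CharP L p := charP_of_injective_algebraMap (algebraMap F L).injective p
  set bK : Fin n → K := fun i => algebraMap F K (c i) with hbK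
  set bL : Fin n → L := fun i => algebraMap F L (c i) with hbL
  rw [defectIdx_eq, defectIdx_eq]
  -- the transfer lemma: nonzero zeros over `K` specialize to nonzero zeros over `L`
  have transfer : ∀ x : Fin n → K, x ≠ 0 → x ∈ zsub p K bK →
      ∃ y : Fin n → L, y ≠ 0 ∧ y ∈ zsub p L bL ∧ ∀ j, x j = 0 → y j = 0 := by
    intro x hx0 hx
    have hxZ : ∑ i, bK i * x i ^ p = 0 := hx
    obtain ⟨iw, hiw⟩ := Function.ne_iff.mp hx0
    obtain ⟨i₀, -, hmax⟩ := Finset.exists_max_image Finset.univ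
      (fun i => R.valuation (x i)) ⟨iw, Finset.mem_univ _⟩
    have hi₀ : x i₀ ≠ 0 := by
      intro h
      apply hx0
      funext j
      have := hmax j (Finset.mem_univ j)
      rw [h, map_zero, le_zero_iff, map_eq_zero] at this
      exact this
    have hmem : ∀ j, x j / x i₀ ∈ R := by
      intro j
      apply R.mem_of_valuation_le_one
      rw [map_div₀]
      exact div_le_one_of_le₀ (hmax j (Finset.mem_univ j)) zero_le'
    set u : Fin n → R := fun j => ⟨x j / x i₀, hmem j⟩ with hu
    set cR : Fin n → R := fun i => ⟨algebraMap F K (c i), hR (c i)⟩ with hcR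
    have hsum : ∑ i, cR i * u i ^ p = 0 := by
      apply Subtype.ext
      push_cast
      have : ∀ i, (algebraMap F K (c i)) * (x i / x i₀) ^ p
          = (bK i * x i ^ p) / x i₀ ^ p := by
        intro i
        rw [div_pow, hbK]
        ring
      rw [Finset.sum_congr rfl fun i _ => this i, ← Finset.sum_div, hxZ, zero_div]
    refine ⟨fun j => g (u j), ?_, ?_, ?_⟩
    · intro h
      have h1 : g (u i₀) = 0 := congrFun h i₀
      have : u i₀ = 1 := by
        apply Subtype.ext
        simp [hu, div_self hi₀]
      rw [this, map_one] at h1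
      exact one_ne_zero h1
    · show ∑ i, bL i * (g (u i)) ^ p = 0
      have : ∀ i, bL i * (g (u i)) ^ p = g (cR i * u i ^ p) := by
        intro i
        rw [map_mul, map_pow, hcR]
        simp only
        rw [hg (c i), hbL]
      rw [Finset.sum_congr rfl fun i _ => this i, ← map_sum, hsum, map_zero]
    · intro j hj
      have huj : u j = 0 := by
        apply Subtype.ext
        simp [hu, hj]
      show g (u j) = 0
      rw [huj, map_zero]
  obtain ⟨S, hSbot, hScard⟩ := exists_compl (zsub p L bL)
  have hKbot : zsub p K bK ⊓ suppSub K (S : Set (Fin n)) = ⊥ := by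
    rw [eq_bot_iff]
    rintro x ⟨hx1, hx2⟩
    rw [Submodule.mem_bot]
    by_contra hx0
    obtain ⟨y, hy0, hyZ, hysupp⟩ := transfer x hx0 hx1
    have hyS : y ∈ suppSub L (S : Set (Fin n)) := fun j hj => hysupp j (hx2 j hj)
    have : y ∈ zsub p L bL ⊓ suppSub L (S : Set (Fin n)) := ⟨hyZ, hyS⟩
    rw [hSbot, Submodule.mem_bot] at this
    exact hy0 this
  have := rank_add_card_le (zsub p K bK) S hKbot
  omega
end

section
/- Let X be a complete (proper) variety over a field k, and let K, L be field extensions of k such that there exists a k-place K ⇀ L. If X has a K-rational point, then X has an L-rational point. -/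
open AlgebraicGeometry CategoryTheory

universe u

/-- Let `X` be a complete (proper, integral) variety over a field `k`,
and `K`, `L` field extensions of `k` admitting a `k`-place `K ⇀ L` (a local `k`-algebra
homomorphism `g : R → L` from a valuation subring `R` of `K` containing `k`).  If `X`
has a `K`-rational point, then `X` has an `L`-rational point. -/
theorem stmt14 (k K L : Type u) [Field k] [Field K] [Field L]
    [Algebra k K] [Algebra k L]
    (X : Scheme.{u}) [IsIntegral X]
    (f : X ⟶ Spec (CommRingCat.of k)) [IsProper f] [LocallyOfFiniteType f]
    (R : ValuationSubring K) (hR : ∀ x : k, algebraMap k K x ∈ R)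
    (g : R →+* L) [IsLocalHom g]
    (hg : ∀ x : k, g ⟨algebraMap k K x, hR x⟩ = algebraMap k L x)
    (xK : Spec (CommRingCat.of K) ⟶ X)
    (hxK : xK ≫ f = Spec.map (CommRingCat.ofHom (algebraMap k K))) :
    ∃ xL : Spec (CommRingCat.of L) ⟶ X,
      xL ≫ f = Spec.map (CommRingCat.ofHom (algebraMap k L)) := by
  have hvc : ValuativeCriterion f :=
    (IsProper.eq_valuativeCriterion ▸ (inferInstance : IsProper f)).1.1.1
  -- the structure map `k → R`
  let φ : k →+* R := (algebraMap k K).codRestrict R.toSubring hR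
  have hφ : (algebraMap (R : Type u) K).comp φ = algebraMap k K := by
    ext x; rfl
  -- the valuative commutative square
  have hcomm : CommSq xK (Spec.map (CommRingCat.ofHom (algebraMap R K))) f
      (Spec.map (CommRingCat.ofHom φ)) := by
    constructor
    rw [hxK, ← Spec.map_comp]
    show _ = Spec.map (CommRingCat.ofHom ((algebraMap (R : Type u) K).comp φ))
    rw [hφ]
  let S : ValuativeCommSq f :=
    ⟨R, K, xK, Spec.map (CommRingCat.ofHom φ), hcomm⟩
  obtain ⟨hu⟩ := hvc S
  obtain ⟨l, hl₁, hl₂⟩ := hu.default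
  refine ⟨Spec.map (CommRingCat.ofHom g) ≫ l, ?_⟩
  rw [Category.assoc, hl₂]
  show Spec.map (CommRingCat.ofHom g) ≫ Spec.map (CommRingCat.ofHom φ) = _
  rw [← Spec.map_comp]
  show Spec.map (CommRingCat.ofHom (g.comp φ)) = _
  congr 1
  ext x
  exact hg x
end
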